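/- arXiv:0803.3555 — 4 statements merged into one kernel-verified Lean document; each statement's English description precedes it below -/
import Mathlib

section
/- Let a, b, c ∈ Aut(X*) be defined by the wreath recursion a = σ(c,b), b = (a,c), c = (b,a). Then the group G = ⟨a,b,c⟩ is isomorphic to the Baumslag–Solitar group BS(1,3) = ⟨s,t | t⁻¹ s t = s³⟩; explicitly, c = ab⁻¹a holds in G, the elements μ = b⁻¹a and b satisfy b⁻¹μb = μ³ and both have infinite order, and the homomorphism BS(1,3) → G determined by s ↦ b⁻¹a, t ↦ b is an isomorphism. -/
/-- `WRec s f f₀ f₁` says that the tree automorphism `f` of the binary rooted tree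
`X* = List Bool` is given by the wreath recursion `f = σˢ(f₀, f₁)`:
the root permutation of `f` is the transposition `σ` when `s = true` and is trivial when
`s = false`, the section of `f` at the letter `0 = false` is `f₀`, and the section of `f`
at the letter `1 = true` is `f₁`. -/
def WRec (s : Bool) (f f₀ f₁ : Equiv.Perm (List Bool)) : Prop :=
  f [] = [] ∧ (∀ w : List Bool, f (false :: w) = s :: f₀ w) ∧
    (∀ w : List Bool, f (true :: w) = (!s) :: f₁ w)

/-- The single defining relator `t⁻¹ s t (sᵐ)⁻¹` of the Baumslag–Solitar group
`BS(1,m) = ⟨s, t | t⁻¹ s t = sᵐ⟩`, with `s` and `t` the two generators. -/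
def bsRels (m : ℤ) : Set (FreeGroup (Fin 2)) :=
  {(FreeGroup.of 1)⁻¹ * FreeGroup.of 0 * FreeGroup.of 1 * (FreeGroup.of 0 ^ m)⁻¹}

namespace BS13Aux

/-- Valuation of a word with weights `(-2)^i`. -/
def v : List Bool → ℤ
  | [] => 0
  | x :: w => (if x then 1 else 0) - 2 * v w

/-- Length preserving. -/
def LP (g : Equiv.Perm (List Bool)) : Prop := ∀ w, (g w).length = w.length

/-- `g` acts as `x ↦ (u x + t)/m` modulo `2^n` on level `n` of the tree. -/
def Aff (g : Equiv.Perm (List Bool)) (u t m : ℤ) : Prop :=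
  ∀ w : List Bool, ((2 : ℤ) ^ w.length) ∣ m * v (g w) - (u * v w + t)

theorem LP.inv {g : Equiv.Perm (List Bool)} (h : LP g) : LP g⁻¹ := by
  intro w
  have h1 := h (g⁻¹ w)
  rw [← Equiv.Perm.mul_apply, mul_inv_cancel, Equiv.Perm.one_apply] at h1
  exact h1.symm

theorem LP.mul {g h : Equiv.Perm (List Bool)} (hg : LP g) (hh : LP h) : LP (g * h) := by
  intro w
  rw [Equiv.Perm.mul_apply, hg, hh]

theorem LP.one : LP 1 := fun w => by simp

theorem LP.pow {g : Equiv.Perm (List Bool)} (hg : LP g) (n : ℕ) : LP (g ^ n) := by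
  induction n with
  | zero => simpa using LP.one
  | succ n ih => rw [pow_succ]; exact ih.mul hg

theorem LP.zpow {g : Equiv.Perm (List Bool)} (hg : LP g) (n : ℤ) : LP (g ^ n) := by
  rcases n with n | n
  · simpa using hg.pow n
  · rw [Int.negSucc_eq, zpow_neg, show ((n:ℤ)+1) = ((n+1 : ℕ) : ℤ) by push_cast; ring,
      zpow_natCast]
    exact (hg.pow (n + 1)).inv

theorem Aff.comp {g h : Equiv.Perm (List Bool)} {u t m u' t' m' : ℤ}
    (hg : Aff g u t m) (hh : Aff h u' t' m') (lh : LP h) :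
    Aff (g * h) (u * u') (u * t' + m' * t) (m * m') := by
  intro w
  obtain ⟨k1, e1⟩ := hg (h w)
  obtain ⟨k2, e2⟩ := hh w
  rw [lh w] at e1
  exact ⟨m' * k1 + u * k2, by rw [Equiv.Perm.mul_apply]; linear_combination m' * e1 + u * e2⟩

theorem Aff.inv {g : Equiv.Perm (List Bool)} {u t m : ℤ}
    (hg : Aff g u t m) (lg : LP g) : Aff g⁻¹ m (-t) u := by
  intro w
  obtain ⟨k, e⟩ := hg (g⁻¹ w)
  rw [← Equiv.Perm.mul_apply, mul_inv_cancel, Equiv.Perm.one_apply] at e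
  rw [(lg.inv) w] at e
  exact ⟨-k, by linear_combination -e⟩

theorem Aff.one' : Aff 1 1 0 1 := fun w => by simp

theorem Aff.congr {g : Equiv.Perm (List Bool)} {u t m u' t' m' : ℤ}
    (h : Aff g u t m) (hu : u = u') (ht : t = t') (hm : m = m') : Aff g u' t' m' := by
  subst hu; subst ht; subst hm; exact h

theorem v_replicate (n : ℕ) : v (List.replicate n false) = 0 := by
  induction n with
  | zero => rfl
  | succ n ih => simp [List.replicate_succ, v, ih]

theorem eq_zero_of_forall_pow_dvd {t : ℤ} (h : ∀ n : ℕ, (2 : ℤ) ^ n ∣ t) : t = 0 := by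
  by_contra ht
  have h2 : ((2 : ℤ)) ^ t.natAbs ≤ |t| :=
    Int.le_of_dvd (abs_pos.mpr ht) ((dvd_abs _ _).mpr (h _))
  have h3 : (t.natAbs : ℤ) < 2 ^ t.natAbs := by
    exact_mod_cast Nat.lt_two_pow_self (n := t.natAbs)
  rw [Int.abs_eq_natAbs] at h2
  omega

theorem aff_one_eq {u t m : ℤ} (h : Aff 1 u t m) : t = 0 ∧ u = m := by
  have ht : t = 0 := by
    apply eq_zero_of_forall_pow_dvd
    intro n
    have h1 := h (List.replicate n false)
    simp [v_replicate] at h1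
    simpa [List.length_replicate] using h1.neg_right.neg_right
  subst ht
  have hu : m - u = 0 := by
    apply eq_zero_of_forall_pow_dvd
    intro n
    have h1 := h (true :: List.replicate n false)
    simp [v, v_replicate] at h1
    calc ((2:ℤ))^n ∣ 2 ^ (n+1) := pow_dvd_pow 2 (by omega)
    _ ∣ m - u := by simpa [List.length_replicate] using h1
  constructor
  · rfl
  · omega

theorem aff_eq_one {g : Equiv.Perm (List Bool)} {u t m : ℤ} (h : Aff g u t m) (hg : g = 1) :
    t = 0 ∧ u = m := aff_one_eq (hg ▸ h)

theorem v_inj : ∀ w w' : List Bool, w.length = w'.length →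
    ((2 : ℤ) ^ w.length ∣ v w - v w') → w = w' := by
  intro w
  induction w with
  | nil => intro w' hl _; cases w' with
    | nil => rfl
    | cons y w' => simp at hl
  | cons x w ih =>
    intro w' hl hd
    cases w' with
    | nil => simp at hl
    | cons y w'' =>
      simp only [List.length_cons, add_left_inj] at hl
      obtain ⟨k, hk⟩ := hd
      rw [List.length_cons, pow_succ] at hk
      have hxy : x = y := by
        have h2 : (2:ℤ) ∣ (v (x :: w) - v (y :: w'')) :=
          ⟨2 ^ w.length * k, by rw [hk]; ring⟩
        obtain ⟨k2, e⟩ := h2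
        cases x <;> cases y <;> simp [v] at e ⊢ <;> omega
      subst hxy
      have hvv : v w - v w'' = 2 ^ w.length * (-k) := by
        cases x <;> simp [v] at hk <;> linarith
      have := ih w'' hl ⟨-k, hvv⟩
      rw [this]

theorem odd_coprime {k : ℤ} (hk : Odd k) (n : ℕ) : IsCoprime ((2:ℤ)^n) k := by
  obtain ⟨j, hj⟩ := hk
  exact IsCoprime.pow_left ⟨-j, 1, by linarith⟩

theorem aff_ext {g h : Equiv.Perm (List Bool)} {u t m u' t' m' : ℤ}
    (hg : Aff g u t m) (hh : Aff h u' t' m') (lg : LP g) (lh : LP h)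
    (hodd : Odd (m * m')) (h1 : u * m' = u' * m) (h2 : t * m' = t' * m) : g = h := by
  apply Equiv.ext
  intro w
  apply v_inj _ _ (by rw [lg, lh])
  rw [lg w]
  have hc := odd_coprime hodd w.length
  apply hc.dvd_of_dvd_mul_left
  obtain ⟨k1, e1⟩ := hg w
  obtain ⟨k2, e2⟩ := hh w
  refine ⟨m' * k1 - m * k2, ?_⟩
  linear_combination m' * e1 - m * e2 + v w * h1 + h2

theorem abc_facts {a b c : Equiv.Perm (List Bool)}
    (ha : WRec true a c b) (hb : WRec false b a c) (hc : WRec false c b a) :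
    (LP a ∧ LP b ∧ LP c) ∧ (Aff a 3 1 9 ∧ Aff b 3 (-2) 9 ∧ Aff c 3 4 9) := by
  obtain ⟨ha0, haf, hat⟩ := ha
  obtain ⟨hb0, hbf, hbt⟩ := hb
  obtain ⟨hc0, hcf, hct⟩ := hc
  have lp : ∀ w : List Bool,
      (a w).length = w.length ∧ (b w).length = w.length ∧ (c w).length = w.length := by
    intro w; induction w with
    | nil => simp [ha0, hb0, hc0]
    | cons x w ih => cases x <;>
      simp [haf, hat, hbf, hbt, hcf, hct, ih.1, ih.2.1, ih.2.2]
  have key : ∀ w : List Bool,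
      ((2:ℤ)^w.length ∣ 9 * v (a w) - (3 * v w + 1)) ∧
      ((2:ℤ)^w.length ∣ 9 * v (b w) - (3 * v w + (-2))) ∧
      ((2:ℤ)^w.length ∣ 9 * v (c w) - (3 * v w + 4)) := by
    intro w; induction w with
    | nil => simp [ha0, hb0, hc0, v]
    | cons x w ih =>
      obtain ⟨⟨ka, ea⟩, ⟨kb, eb⟩, ⟨kc, ec⟩⟩ := ih
      cases x
      · refine ⟨⟨-kc, ?_⟩, ⟨-ka, ?_⟩, ⟨-kb, ?_⟩⟩ <;>
          simp only [haf, hbf, hcf, v, List.length_cons, pow_succ] <;> norm_num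
        · linear_combination (-2) * ec
        · linear_combination (-2) * ea
        · linear_combination (-2) * eb
      · refine ⟨⟨-kb, ?_⟩, ⟨-kc, ?_⟩, ⟨-ka, ?_⟩⟩ <;>
          simp only [hat, hbt, hct, v, List.length_cons, pow_succ] <;> norm_num
        · linear_combination (-2) * eb
        · linear_combination (-2) * ec
        · linear_combination (-2) * ea
  exact ⟨⟨fun w => (lp w).1, fun w => (lp w).2.1, fun w => (lp w).2.2⟩,
    fun w => (key w).1, fun w => (key w).2.1, fun w => (key w).2.2⟩

theorem bs_rel : (PresentedGroup.of (rels := bsRels 3) 1)⁻¹ * PresentedGroup.of 0 *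
    PresentedGroup.of 1 = (PresentedGroup.of 0) ^ (3:ℤ) := by
  have h0 : PresentedGroup.mk (bsRels 3)
      ((FreeGroup.of 1)⁻¹ * FreeGroup.of 0 * FreeGroup.of 1 * (FreeGroup.of 0 ^ (3:ℤ))⁻¹) = 1 := by
    apply (QuotientGroup.eq_one_iff _).mpr
    exact Subgroup.subset_normalClosure (by simp [bsRels])
  simp only [map_mul, map_inv, map_zpow] at h0
  rw [mul_inv_eq_one] at h0
  exact h0

theorem bs_conj (q : ℤ) : (PresentedGroup.of (rels := bsRels 3) 1)⁻¹ *
    (PresentedGroup.of 0) ^ q * PresentedGroup.of 1 = (PresentedGroup.of 0) ^ (3 * q) := by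
  have h1 : ((PresentedGroup.of (rels := bsRels 3) 1)⁻¹ * PresentedGroup.of 0 *
      PresentedGroup.of 1) ^ q = (PresentedGroup.of (rels := bsRels 3) 1)⁻¹ *
      (PresentedGroup.of 0) ^ q * PresentedGroup.of 1 := by
    have h2 := conj_zpow (i := q) (a := (PresentedGroup.of (rels := bsRels 3) 1)⁻¹)
      (b := PresentedGroup.of 0)
    simpa using h2
  rw [bs_rel] at h1
  rw [← h1, ← zpow_mul, mul_comm]

theorem bs_step (j : ℤ) : (PresentedGroup.of (rels := bsRels 3) 0) ^ j * PresentedGroup.of 1 =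
    PresentedGroup.of 1 * (PresentedGroup.of 0) ^ (3 * j) := by
  have := bs_conj j
  rw [← this]
  group

theorem bs_move (q : ℤ) (p : ℕ) :
    (PresentedGroup.of (rels := bsRels 3) 0) ^ q * (PresentedGroup.of 1) ^ p =
    (PresentedGroup.of 1) ^ p * (PresentedGroup.of 0) ^ ((3:ℤ) ^ p * q) := by
  induction p generalizing q with
  | zero => simp
  | succ p ih =>
    calc (PresentedGroup.of (rels := bsRels 3) 0) ^ q * (PresentedGroup.of 1) ^ (p + 1)
        = ((PresentedGroup.of 0) ^ q * (PresentedGroup.of 1) ^ p) * PresentedGroup.of 1 := by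
          rw [pow_succ, mul_assoc]
      _ = (PresentedGroup.of 1) ^ p *
          ((PresentedGroup.of 0) ^ ((3:ℤ) ^ p * q) * PresentedGroup.of 1) := by
          rw [ih, mul_assoc]
      _ = (PresentedGroup.of 1) ^ p *
          (PresentedGroup.of 1 * (PresentedGroup.of 0) ^ (3 * ((3:ℤ) ^ p * q))) := by
          rw [bs_step]
      _ = (PresentedGroup.of 1) ^ (p + 1) * (PresentedGroup.of 0) ^ ((3:ℤ) ^ (p + 1) * q) := by
          rw [← mul_assoc, ← pow_succ]
          congr 1
          rw [show (3:ℤ) ^ (p+1) * q = 3 * ((3:ℤ) ^ p * q) by ring]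

theorem bs_nf (x : PresentedGroup (bsRels 3)) : ∃ (p : ℕ) (q m : ℤ),
    x = (PresentedGroup.of 1) ^ p * (PresentedGroup.of 0) ^ q * (PresentedGroup.of 1) ^ m := by
  have key : ∀ z : FreeGroup (Fin 2), ∀ (p : ℕ) (q m : ℤ), ∃ (p' : ℕ) (q' m' : ℤ),
      PresentedGroup.mk (bsRels 3) z *
        ((PresentedGroup.of 1) ^ p * (PresentedGroup.of 0) ^ q * (PresentedGroup.of 1) ^ m) =
      (PresentedGroup.of 1) ^ p' * (PresentedGroup.of 0) ^ q' * (PresentedGroup.of 1) ^ m' := by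
    intro z
    induction z with
    | C1 => intro p q m; exact ⟨p, q, m, by simp⟩
    | of x =>
      intro p q m
      rw [show (PresentedGroup.mk (bsRels 3) (FreeGroup.of x) : PresentedGroup (bsRels 3)) =
          PresentedGroup.of (rels := bsRels 3) x from rfl]
      have hx : x = 0 ∨ x = 1 := by fin_cases x <;> [exact Or.inl rfl; exact Or.inr rfl]
      rcases hx with rfl | rfl
      · refine ⟨p, (3:ℤ) ^ p + q, m, ?_⟩
        calc PresentedGroup.of (rels := bsRels 3) 0 *
            ((PresentedGroup.of 1) ^ p * (PresentedGroup.of 0) ^ q * (PresentedGroup.of 1) ^ m)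
            = ((PresentedGroup.of 0) ^ (1:ℤ) * (PresentedGroup.of 1) ^ p) *
              ((PresentedGroup.of 0) ^ q * (PresentedGroup.of 1) ^ m) := by group
          _ = ((PresentedGroup.of 1) ^ p * (PresentedGroup.of 0) ^ ((3:ℤ) ^ p * 1)) *
              ((PresentedGroup.of 0) ^ q * (PresentedGroup.of 1) ^ m) := by rw [bs_move]
          _ = (PresentedGroup.of 1) ^ p * (PresentedGroup.of 0) ^ ((3:ℤ) ^ p + q) *
              (PresentedGroup.of 1) ^ m := by rw [mul_one]; group
      · exact ⟨p + 1, q, m, by rw [pow_succ']; group⟩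
    | inv_of x _ =>
      intro p q m
      rw [map_inv, show (PresentedGroup.mk (bsRels 3) (FreeGroup.of x) : PresentedGroup (bsRels 3)) =
          PresentedGroup.of (rels := bsRels 3) x from rfl]
      have hx : x = 0 ∨ x = 1 := by fin_cases x <;> [exact Or.inl rfl; exact Or.inr rfl]
      rcases hx with rfl | rfl
      · refine ⟨p, q - (3:ℤ) ^ p, m, ?_⟩
        calc (PresentedGroup.of (rels := bsRels 3) 0)⁻¹ *
            ((PresentedGroup.of 1) ^ p * (PresentedGroup.of 0) ^ q * (PresentedGroup.of 1) ^ m)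
            = ((PresentedGroup.of 0) ^ (-1:ℤ) * (PresentedGroup.of 1) ^ p) *
              ((PresentedGroup.of 0) ^ q * (PresentedGroup.of 1) ^ m) := by group
          _ = ((PresentedGroup.of 1) ^ p * (PresentedGroup.of 0) ^ ((3:ℤ) ^ p * (-1))) *
              ((PresentedGroup.of 0) ^ q * (PresentedGroup.of 1) ^ m) := by rw [bs_move]
          _ = (PresentedGroup.of 1) ^ p * (PresentedGroup.of 0) ^ (q - (3:ℤ) ^ p) *
              (PresentedGroup.of 1) ^ m := by group
      · cases p with
        | zero =>
          refine ⟨0, 3 * q, m - 1, ?_⟩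
          calc (PresentedGroup.of (rels := bsRels 3) 1)⁻¹ *
              ((PresentedGroup.of 1) ^ 0 * (PresentedGroup.of 0) ^ q * (PresentedGroup.of 1) ^ m)
              = ((PresentedGroup.of 1)⁻¹ * (PresentedGroup.of 0) ^ q * PresentedGroup.of 1) *
                (PresentedGroup.of 1) ^ (m - 1) := by group
            _ = (PresentedGroup.of 0) ^ (3 * q) * (PresentedGroup.of 1) ^ (m - 1) := by
                rw [bs_conj]
            _ = (PresentedGroup.of 1) ^ 0 * (PresentedGroup.of 0) ^ (3 * q) *
                (PresentedGroup.of 1) ^ (m - 1) := by group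
        | succ p' => exact ⟨p', q, m, by group⟩
    | mul y z ihy ihz =>
      intro p q m
      obtain ⟨p1, q1, m1, h1⟩ := ihz p q m
      obtain ⟨p2, q2, m2, h2⟩ := ihy p1 q1 m1
      exact ⟨p2, q2, m2, by rw [map_mul, mul_assoc, h1, h2]⟩
  obtain ⟨z, rfl⟩ := PresentedGroup.mk_surjective (bsRels 3) x
  obtain ⟨p, q, m, h⟩ := key z 0 0 0
  exact ⟨p, q, m, by simpa using h⟩

end BS13Aux

/-- Let `a, b, c` be the tree automorphisms defined by the wreath
recursion `a = σ(c,b)`, `b = (a,c)`, `c = (b,a)`.  Then `c = ab⁻¹a`, the elements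
`μ = b⁻¹a` and `b` satisfy `b⁻¹μb = μ³` and both have infinite order, and the
homomorphism `BS(1,3) → ⟨a,b,c⟩` determined by `s ↦ b⁻¹a`, `t ↦ b` is an
isomorphism. -/
theorem generates_baumslag_solitar_1_3 (a b c : Equiv.Perm (List Bool))
    (ha : WRec true a c b) (hb : WRec false b a c) (hc : WRec false c b a) :
    c = a * b⁻¹ * a ∧
    b⁻¹ * (b⁻¹ * a) * b = (b⁻¹ * a) ^ (3 : ℤ) ∧
    ¬ IsOfFinOrder (b⁻¹ * a) ∧
    ¬ IsOfFinOrder b ∧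
    ∃ ψ : PresentedGroup (bsRels 3) →* Subgroup.closure {a, b, c},
      Function.Bijective ψ ∧
      (ψ (PresentedGroup.of 0) : Equiv.Perm (List Bool)) = b⁻¹ * a ∧
      (ψ (PresentedGroup.of 1) : Equiv.Perm (List Bool)) = b := by
  classical
  obtain ⟨⟨la, lb, lc⟩, Aa, Ab, Ac⟩ := BS13Aux.abc_facts ha hb hc
  have lbi : BS13Aux.LP b⁻¹ := lb.inv
  have lμ : BS13Aux.LP (b⁻¹ * a) := lbi.mul la
  have Abi : BS13Aux.Aff b⁻¹ 9 2 3 := by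
    have h := Ab.inv lb
    norm_num at h
    exact h
  have Aμ : BS13Aux.Aff (b⁻¹ * a) 27 27 27 := by
    have h := Abi.comp Aa la
    norm_num at h
    exact h
  -- Part 1 : c = a * b⁻¹ * a
  have part1 : c = a * b⁻¹ * a := by
    have A1 : BS13Aux.Aff (a * b⁻¹) 27 9 27 := by
      have h := Aa.comp Abi lbi
      norm_num at h
      exact h
    have A2 := A1.comp Aa la
    exact BS13Aux.aff_ext Ac A2 lc (((la.mul lbi)).mul la) (Int.odd_iff.mpr (by norm_num))
      (by norm_num) (by norm_num)
  -- Part 2 : b⁻¹ μ b = μ³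
  have part2 : b⁻¹ * (b⁻¹ * a) * b = (b⁻¹ * a) ^ (3 : ℤ) := by
    have hz : (b⁻¹ * a) ^ (3:ℤ) = (b⁻¹ * a) * (b⁻¹ * a) * (b⁻¹ * a) := by
      rw [show (3:ℤ) = ((3:ℕ):ℤ) from rfl, zpow_natCast, pow_succ, pow_succ, pow_one]
    rw [hz]
    have AL := (Abi.comp Aμ lμ).comp Ab lb
    have AR := (Aμ.comp Aμ lμ).comp Aμ lμ
    exact BS13Aux.aff_ext AL AR ((lbi.mul lμ).mul lb) ((lμ.mul lμ).mul lμ)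
      (Int.odd_iff.mpr (by norm_num)) (by norm_num) (by norm_num)
  -- powers of μ
  have Aμpow : ∀ n : ℕ, BS13Aux.Aff ((b⁻¹ * a) ^ n) (27 ^ n) ((n : ℤ) * 27 ^ n) (27 ^ n) := by
    intro n
    induction n with
    | zero => simpa using BS13Aux.Aff.one'
    | succ n ih =>
      have e := ih.comp Aμ lμ
      rw [← pow_succ] at e
      exact e.congr (by ring) (by push_cast; ring) (by ring)
  -- powers of b
  have Abn : ∀ n : ℕ, ∃ t : ℤ, BS13Aux.Aff (b ^ n) (3 ^ n) t (9 ^ n) := by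
    intro n
    induction n with
    | zero => exact ⟨0, by simpa using BS13Aux.Aff.one'⟩
    | succ n ih =>
      obtain ⟨t, ht⟩ := ih
      refine ⟨3 ^ n * (-2) + 9 * t, ?_⟩
      have e := ht.comp Ab lb
      rw [← pow_succ] at e
      exact e.congr (by ring) (by ring) (by ring)
  -- Part 3 : μ has infinite order
  have part3 : ¬ IsOfFinOrder (b⁻¹ * a) := by
    rw [isOfFinOrder_iff_pow_eq_one]
    rintro ⟨n, hn, h1⟩
    have h2 := (BS13Aux.aff_eq_one (Aμpow n) h1).1
    have h27 : (27:ℤ) ^ n ≠ 0 := by positivity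
    have h3 : (n : ℤ) = 0 := (mul_eq_zero.mp h2).resolve_right h27
    omega
  -- Part 4 : b has infinite order
  have part4 : ¬ IsOfFinOrder b := by
    rw [isOfFinOrder_iff_pow_eq_one]
    rintro ⟨n, hn, h1⟩
    obtain ⟨t, ht⟩ := Abn n
    have h2 := (BS13Aux.aff_eq_one ht h1).2
    rw [show (9:ℤ) = 3 ^ 2 by norm_num, ← pow_mul] at h2
    have h3 : (3:ℕ) ^ n = 3 ^ (2 * n) := by exact_mod_cast h2
    have h4 := Nat.pow_right_injective (by norm_num) h3
    omega
  -- the homomorphism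
  have haG : a ∈ Subgroup.closure {a, b, c} := Subgroup.subset_closure (by simp)
  have hbG : b ∈ Subgroup.closure {a, b, c} := Subgroup.subset_closure (by simp)
  have hcG : c ∈ Subgroup.closure {a, b, c} := Subgroup.subset_closure (by simp)
  have hμG : b⁻¹ * a ∈ Subgroup.closure {a, b, c} := mul_mem (inv_mem hbG) haG
  set f : Fin 2 → Subgroup.closure {a, b, c} := ![⟨b⁻¹ * a, hμG⟩, ⟨b, hbG⟩] with hf
  have hrels : ∀ r ∈ bsRels 3, FreeGroup.lift f r = 1 := by
    intro r hr
    simp only [bsRels, Set.mem_singleton_iff] at hr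
    subst hr
    simp only [map_mul, map_inv, map_zpow, FreeGroup.lift_apply_of]
    refine Subtype.ext ?_
    push_cast
    simp only [hf, Matrix.cons_val_zero, Matrix.cons_val_one, Matrix.head_cons]
    rw [mul_inv_eq_one]
    exact part2
  refine ⟨part1, part2, part3, part4, PresentedGroup.toGroup hrels, ⟨?_, ?_⟩, ?_, ?_⟩
  · -- injectivity
    rw [injective_iff_map_eq_one]
    intro x hx
    obtain ⟨p, q, m, rfl⟩ := BS13Aux.bs_nf x
    rw [map_mul, map_mul, map_pow, map_zpow, map_zpow, PresentedGroup.toGroup.of,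
      PresentedGroup.toGroup.of] at hx
    simp only [hf, Matrix.cons_val_zero, Matrix.cons_val_one, Matrix.head_cons] at hx
    have hx' : b ^ p * (b⁻¹ * a) ^ q * b ^ m = 1 := by
      have h := congrArg (Subtype.val) hx
      push_cast at h
      exact h
    -- Aff data for μ ^ q
    have Aμz : BS13Aux.Aff ((b⁻¹ * a) ^ q) (27 ^ q.natAbs) (q * 27 ^ q.natAbs)
        (27 ^ q.natAbs) := by
      rcases le_or_gt 0 q with hq | hq
      · obtain ⟨n, rfl⟩ := Int.eq_ofNat_of_zero_le hq
        rw [zpow_natCast]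
        exact (Aμpow n).congr (by simp) (by simp) (by simp)
      · obtain ⟨n, rfl⟩ : ∃ n : ℕ, q = -(n : ℤ) := ⟨q.natAbs, by omega⟩
        rw [zpow_neg, zpow_natCast]
        have h := (Aμpow n).inv (lμ.pow n)
        exact h.congr (by simp) (by simp) (by simp)
    -- Aff data for b ^ m
    obtain ⟨α, β, t2, hαβ, hbm⟩ :
        ∃ (α β : ℕ) (t2 : ℤ), ((α:ℤ) - β = m) ∧
          BS13Aux.Aff (b ^ m) ((3:ℤ) ^ α * 9 ^ β) t2 ((9:ℤ) ^ α * 3 ^ β) := by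
      rcases le_or_gt 0 m with hm | hm
      · obtain ⟨n, rfl⟩ := Int.eq_ofNat_of_zero_le hm
        obtain ⟨t, ht⟩ := Abn n
        refine ⟨n, 0, t, by push_cast; ring, ?_⟩
        rw [zpow_natCast]
        exact ht.congr (by ring) (by ring) (by ring)
      · obtain ⟨n, rfl⟩ : ∃ n : ℕ, m = -(n : ℤ) := ⟨m.natAbs, by omega⟩
        obtain ⟨t, ht⟩ := Abn n
        have hinv := ht.inv (lb.pow n)
        refine ⟨0, n, -t, by push_cast; ring, ?_⟩
        rw [zpow_neg, zpow_natCast]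
        exact hinv.congr (by ring) (by ring) (by ring)
    obtain ⟨t1, hbp⟩ := Abn p
    have C2 := hbp.comp Aμz (lμ.zpow q)
    have C3 := C2.comp hbm (lb.zpow m)
    have hum := (BS13Aux.aff_eq_one C3 hx').2
    set s := q.natAbs with hs
    have key3 : (3:ℤ) ^ (p + 3*s + α + 2*β) = (3:ℤ) ^ (2*p + 3*s + 2*α + β) := by
      calc (3:ℤ) ^ (p + 3*s + α + 2*β)
          = 3 ^ p * 27 ^ s * ((3:ℤ) ^ α * 9 ^ β) := by
            simp only [show (9:ℤ) = 3 ^ 2 by norm_num, show (27:ℤ) = 3 ^ 3 by norm_num,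
              ← pow_mul]
            ring
        _ = 9 ^ p * 27 ^ s * ((9:ℤ) ^ α * 3 ^ β) := hum
        _ = (3:ℤ) ^ (2*p + 3*s + 2*α + β) := by
            simp only [show (9:ℤ) = 3 ^ 2 by norm_num, show (27:ℤ) = 3 ^ 3 by norm_num,
              ← pow_mul]
            ring
    have keyN : (3:ℕ) ^ (p + 3*s + α + 2*β) = 3 ^ (2*p + 3*s + 2*α + β) := by
      exact_mod_cast key3
    have hexp := Nat.pow_right_injective (by norm_num) keyN
    have hm : m = -(p : ℤ) := by omega
    have hμq1 : (b⁻¹ * a) ^ q = 1 := by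
      have h := hx'
      rw [hm, zpow_neg, zpow_natCast] at h
      have h2 : b ^ p * (b⁻¹ * a) ^ q = b ^ p := by
        rw [← mul_inv_eq_one]
        exact h
      calc (b⁻¹ * a) ^ q = (b ^ p)⁻¹ * (b ^ p * (b⁻¹ * a) ^ q) := by group
        _ = (b ^ p)⁻¹ * b ^ p := by rw [h2]
        _ = 1 := by group
    have hq0 : q = 0 := by
      have h2 := (BS13Aux.aff_eq_one Aμz hμq1).1
      have h27 : (27:ℤ) ^ s ≠ 0 := by positivity
      exact (mul_eq_zero.mp h2).resolve_right h27
    rw [hq0, hm]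
    group
  · -- surjectivity
    intro x
    have main : ∀ g, g ∈ Subgroup.closure {a, b, c} →
        ∃ y, ((PresentedGroup.toGroup hrels y : Subgroup.closure {a, b, c}) :
          Equiv.Perm (List Bool)) = g := by
      intro g hg
      induction hg using Subgroup.closure_induction with
      | mem x hx =>
        simp only [Set.mem_insert_iff, Set.mem_singleton_iff] at hx
        rcases hx with rfl | rfl | rfl
        · refine ⟨.of 1 * .of 0, ?_⟩
          rw [map_mul, PresentedGroup.toGroup.of, PresentedGroup.toGroup.of]
          simp only [hf, Matrix.cons_val_zero, Matrix.cons_val_one, Matrix.head_cons]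
          push_cast
          group
        · refine ⟨.of 1, ?_⟩
          rw [PresentedGroup.toGroup.of]
          simp [hf]
        · refine ⟨(.of 1 * .of 0) * (.of 1)⁻¹ * (.of 1 * .of 0), ?_⟩
          rw [map_mul, map_mul, map_inv, map_mul, PresentedGroup.toGroup.of,
            PresentedGroup.toGroup.of]
          simp only [hf, Matrix.cons_val_zero, Matrix.cons_val_one, Matrix.head_cons]
          push_cast
          rw [part1]
          group
      | one => exact ⟨1, by rw [map_one]; rfl⟩
      | mul x y hx hy ihx ihy =>
        obtain ⟨y1, h1⟩ := ihx
        obtain ⟨y2, h2⟩ := ihy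
        exact ⟨y1 * y2, by rw [map_mul]; push_cast; rw [h1, h2]⟩
      | inv x hx ihx =>
        obtain ⟨y1, h1⟩ := ihx
        exact ⟨y1⁻¹, by rw [map_inv]; push_cast; rw [h1]⟩
    obtain ⟨y, hy⟩ := main x x.2
    exact ⟨y, Subtype.ext hy⟩
  · rw [PresentedGroup.toGroup.of]
    simp [hf]
  · rw [PresentedGroup.toGroup.of]
    simp [hf]
end

section
/- Let a, b, c ∈ Aut(X*) be defined by the wreath recursion a = σ(c,c), b = (a,b), c = (b,a) (the Bellaterra automaton). Then a² = b² = c² = 1, and the group G = ⟨a,b,c⟩ is isomorphic to the free product C₂ * C₂ * C₂: the canonical homomorphism C₂ * C₂ * C₂ → G sending the generators of the three free factors to a, b, c is an isomorphism; equivalently, every nonempty word over {a,b,c} in which no two consecutive letters are equal represents a nontrivial element of G. -/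
/-- The defining relators of the free product `C₂ * C₂ * C₂` of three copies of the
cyclic group of order 2: the squares of the three generators. -/
def freeProductC2Rels : Set (FreeGroup (Fin 3)) :=
  {FreeGroup.of 0 ^ 2, FreeGroup.of 1 ^ 2, FreeGroup.of 2 ^ 2}

namespace Bellaterra

abbrev L3 := List (Fin 3)

def pa : L3 → Bool
  | [] => false
  | g :: l => xor (decide (g = 0)) (pa l)

def sec (t : Bool) (g : Fin 3) : Fin 3 :=
  if g = 0 then 2 else if g = 1 then (if t then 1 else 0) else (if t then 0 else 1)

def S (t : Bool) : L3 → L3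
  | [] => []
  | g :: l => sec (xor t (pa l)) g :: S t l

def Sec : List Bool → L3 → L3
  | [], l => l
  | x :: v, l => Sec v (S x l)

def qs : List Bool → L3 → List Bool
  | [], _ => []
  | x :: v, l => pa l :: qs v (S x l)

def SC : List Bool → List Bool → L3 → L3
  | x :: v, q :: qq, l => SC v qq (S (xor x q) l)
  | _, _, l => l

def pq : List Bool → List Bool → L3 → List Bool
  | x :: v, q :: qq, l => pa l :: pq v qq (S (xor x q) l)
  | _, _, _ => []

lemma pa_append (l m : L3) : pa (l ++ m) = xor (pa l) (pa m) := by
  induction l with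
  | nil => simp [pa]
  | cons g l ih => simp [pa, ih, Bool.xor_assoc]

lemma S_append (t : Bool) (l m : L3) : S t (l ++ m) = S (xor t (pa m)) l ++ S t m := by
  induction l with
  | nil => simp [S]
  | cons g l ih =>
      simp only [List.cons_append, S, List.append_eq, ih, pa_append]
      congr 1
      congr 1
      generalize pa l = p
      generalize pa m = q
      cases t <;> cases p <;> cases q <;> rfl

lemma length_S (t : Bool) (l : L3) : (S t l).length = l.length := by
  induction l with
  | nil => rfl
  | cons g l ih => simp [S, ih]

lemma Sec_split (v : List Bool) (l m : L3) :
    Sec v (l ++ m) = SC v (qs v m) l ++ Sec v m := by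
  induction v generalizing l m with
  | nil => rfl
  | cons x v ih => simp only [Sec, qs, SC, S_append, ih]

lemma qs_split (v : List Bool) (l m : L3) :
    qs v (l ++ m) = List.zipWith xor (pq v (qs v m) l) (qs v m) := by
  induction v generalizing l m with
  | nil => rfl
  | cons x v ih =>
      simp only [qs, pq, pa_append, S_append, ih, List.zipWith]

lemma sec_ne (s : Bool) (g g' : Fin 3) (h : g ≠ g') :
    sec (xor (decide (g' = 0)) s) g ≠ sec s g' := by
  revert s; revert h; revert g'; revert g; decide

lemma chain'_S (t : Bool) (l : L3) (h : l.Chain' (· ≠ ·)) : (S t l).Chain' (· ≠ ·) := by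
  induction l with
  | nil => exact h
  | cons g l ih =>
      cases l with
      | nil => simp [S, List.Chain', List.isChain_singleton]
      | cons g' l' =>
          unfold List.Chain' at h
          rw [List.isChain_cons_cons] at h
          refine List.isChain_cons_cons.mpr ⟨?_, ih h.2⟩
          show sec (xor t (pa (g' :: l'))) g ≠ sec (xor t (pa l')) g'
          have : xor t (pa (g' :: l')) = xor (decide (g' = 0)) (xor t (pa l')) := by
            show xor t (xor (decide (g' = 0)) (pa l')) = _
            generalize pa l' = p
            generalize (decide (g' = 0)) = d
            cases t <;> cases p <;> cases d <;> rfl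
          rw [this]
          exact sec_ne _ _ _ h.1

lemma sec_inj (t : Bool) (g g' : Fin 3) (h : sec t g = sec t g') : g = g' := by
  revert h; revert g'; revert g; revert t; decide

lemma S_inj (t : Bool) (l l' : L3) (hlen : l.length = l'.length) (h : S t l = S t l') :
    l = l' := by
  induction l generalizing l' with
  | nil => cases l' with
    | nil => rfl
    | cons g l' => simp at hlen
  | cons g l ih =>
      cases l' with
      | nil => simp at hlen
      | cons g' m =>
          simp only [S, List.cons.injEq] at h
          have hl : l = m := ih m (by simpa using hlen) h.2
          subst hl
          exact by rw [sec_inj _ _ _ h.1]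

lemma length_Sec (v : List Bool) (l : L3) : (Sec v l).length = l.length := by
  induction v generalizing l with
  | nil => rfl
  | cons x v ih => simp [Sec, ih, length_S]

lemma chain'_Sec (v : List Bool) (l : L3) (h : l.Chain' (· ≠ ·)) :
    (Sec v l).Chain' (· ≠ ·) := by
  induction v generalizing l with
  | nil => exact h
  | cons x v ih => exact ih _ (chain'_S _ _ h)

lemma Sec_inj (v : List Bool) (l l' : L3) (hlen : l.length = l'.length)
    (h : Sec v l = Sec v l') : l = l' := by
  induction v generalizing l l' with
  | nil => exact h
  | cons x v ih =>
      exact S_inj x l l' hlen (ih _ _ (by rw [length_S, length_S, hlen]) h)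

lemma Sec_append (v₁ v₂ : List Bool) (l : L3) :
    Sec (v₁ ++ v₂) l = Sec v₂ (Sec v₁ l) := by
  induction v₁ generalizing l with
  | nil => rfl
  | cons x v ih => simp [Sec, ih]

lemma Sec_cons (v : List Bool) (g : Fin 3) (u : L3) :
    ∃ c : Fin 3, Sec v (g :: u) = c :: Sec v u := by
  induction v generalizing g u with
  | nil => exact ⟨g, rfl⟩
  | cons x v ih => exact ih _ _


def pat5 (r : ℕ) : Fin 3 :=
  if r = 0 then 0 else if r = 1 then 2 else if r = 2 then 0 else if r = 3 then 1 else 2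

def u (i : ℕ) : Fin 3 := pat5 (i % 5)

def A : ℕ → L3
  | 0 => []
  | m + 1 => u m :: A m

def T : List Bool := [false, false, false, true, true]

def Qr (r : ℕ) : List Bool :=
  if r = 0 then [false, false, false, false, false]
  else if r = 1 then [true, false, false, true, false]
  else if r = 2 then [true, true, false, true, true]
  else if r = 3 then [false, true, true, true, true]
  else [false, false, true, false, true]

def hp (r : ℕ) : Fin 3 := if r ≤ 2 then 1 else if r = 3 then 2 else 0

lemma length_A (m : ℕ) : (A m).length = m := by
  induction m with
  | zero => rfl
  | succ m ih => simp [A, ih]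

lemma pat5_ne (r : ℕ) (h : r < 5) : pat5 ((r + 1) % 5) ≠ pat5 r := by
  interval_cases r <;> decide

lemma chain'_A (m : ℕ) : (A m).Chain' (· ≠ ·) := by
  induction m with
  | zero => simp [A, List.Chain']
  | succ m ih =>
      cases m with
      | zero => simp [A, List.Chain']
      | succ k =>
          refine List.isChain_cons_cons.mpr ⟨?_, ih⟩
          show u (k + 1) ≠ u k
          unfold u
          have h1 : (k + 1) % 5 = (k % 5 + 1) % 5 := by omega
      
          rw [h1]
          exact pat5_ne (k % 5) (Nat.mod_lt _ (by norm_num))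

lemma A_add5 (k : ℕ) :
    A (k + 5) = [u (k+4), u (k+3), u (k+2), u (k+1), u k] ++ A k := rfl

lemma phi (m : ℕ) : Sec T (A m) = A m ∧ qs T (A m) = Qr (m % 5) := by
  induction m using Nat.strong_induction_on with
  | _ m IH =>
    by_cases h5 : m < 5
    · interval_cases m <;> exact ⟨by decide, by decide⟩
    · obtain ⟨k, rfl⟩ : ∃ k, m = k + 5 := ⟨m - 5, by omega⟩
      obtain ⟨hs, hq⟩ := IH k (by omega)
      have hr : k % 5 = 0 ∨ k % 5 = 1 ∨ k % 5 = 2 ∨ k % 5 = 3 ∨ k % 5 = 4 := by omega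
      have e0 : (k + 5) % 5 = k % 5 := by omega
      rcases hr with hr | hr | hr | hr | hr <;>
      · have e1 : (k+1) % 5 = (k % 5 + 1) % 5 := by omega
        have e2 : (k+2) % 5 = (k % 5 + 2) % 5 := by omega
        have e3 : (k+3) % 5 = (k % 5 + 3) % 5 := by omega
        have e4 : (k+4) % 5 = (k % 5 + 4) % 5 := by omega
        rw [A_add5, e0]
        unfold u
        rw [e1, e2, e3, e4, hr]
        rw [Sec_split, qs_split, hq, hs, hr]
        exact ⟨by congr 1 <;> decide, by decide⟩

lemma swap (m : ℕ) :
    ∃ (hd : Fin 3) (tl : L3) (d₁ d₂ : Fin 3),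
      (hd :: tl).length = m + 1 ∧ (hd :: tl).Chain' (· ≠ ·) ∧ d₁ ≠ d₂ ∧ d₁ ≠ hd ∧ d₂ ≠ hd ∧
      Sec T (d₁ :: hd :: tl) = d₂ :: hd :: tl := by
  obtain ⟨hs, hq⟩ := phi m
  have hr : m % 5 = 0 ∨ m % 5 = 1 ∨ m % 5 = 2 ∨ m % 5 = 3 ∨ m % 5 = 4 := by omega
  have hsplit : ∀ d h : Fin 3, Sec T (d :: h :: A m) = SC T (Qr (m % 5)) [d, h] ++ A m := by
    intro d h
    have : d :: h :: A m = [d, h] ++ A m := rfl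
    rw [this, Sec_split, hq, hs]
  have hchain : ∀ h : Fin 3, (h ≠ pat5 ((m + 4) % 5)) → (h :: A m).Chain' (· ≠ ·) := by
    intro h hh
    cases m with
    | zero => simp [A, List.Chain']
    | succ k =>
        refine List.isChain_cons_cons.mpr ⟨?_, by exact chain'_A (k+1)⟩
        show h ≠ u k
        unfold u
        have : k % 5 = (k + 1 + 4) % 5 := by omega
        rw [this]; exact hh
  have hlen : ∀ h : Fin 3, (h :: A m).length = m + 1 := by
    intro h; simp [length_A]
  rcases hr with hr | hr | hr | hr | hr
  · refine ⟨1, A m, 0, 2, hlen 1, hchain 1 (by rw [show (m+4)%5 = 4 from by omega]; decide),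
      by decide, by decide, by decide, ?_⟩
    rw [hsplit, hr]; rfl
  · refine ⟨1, A m, 0, 2, hlen 1, hchain 1 (by rw [show (m+4)%5 = 0 from by omega]; decide),
      by decide, by decide, by decide, ?_⟩
    rw [hsplit, hr]; rfl
  · refine ⟨1, A m, 0, 2, hlen 1, hchain 1 (by rw [show (m+4)%5 = 1 from by omega]; decide),
      by decide, by decide, by decide, ?_⟩
    rw [hsplit, hr]; rfl
  · refine ⟨2, A m, 0, 1, hlen 2, hchain 2 (by rw [show (m+4)%5 = 2 from by omega]; decide),
      by decide, by decide, by decide, ?_⟩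
    rw [hsplit, hr]; rfl
  · refine ⟨0, A m, 1, 2, hlen 0, hchain 0 (by rw [show (m+4)%5 = 3 from by omega]; decide),
      by decide, by decide, by decide, ?_⟩
    rw [hsplit, hr]; rfl

def Reach (l m : L3) : Prop := ∃ v : List Bool, Sec v l = m

lemma reach_refl (l : L3) : Reach l l := ⟨[], rfl⟩

lemma Reach.trans {l m k : L3} (h1 : Reach l m) (h2 : Reach m k) : Reach l k := by
  obtain ⟨v₁, rfl⟩ := h1
  obtain ⟨v₂, rfl⟩ := h2
  exact ⟨v₁ ++ v₂, Sec_append v₁ v₂ l⟩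

def Wn (n : ℕ) : Type := {l : L3 // l.length = n ∧ l.Chain' (· ≠ ·)}

instance (n : ℕ) : Finite (Wn n) := by
  refine Finite.of_injective
    (fun w : Wn n => (fun i : Fin n => w.1.get (Fin.cast w.2.1.symm i))) ?_
  intro w w' h
  apply Subtype.ext
  apply List.ext_get (w.2.1.trans w'.2.1.symm)
  intro i h1 h2
  exact congrFun h ⟨i, w.2.1 ▸ h1⟩

lemma step_rev (x : Bool) (l : L3) (hc : l.Chain' (· ≠ ·)) : Reach (S x l) l := by
  set n := l.length with hn
  let F : Wn n → Wn n := fun w =>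
    ⟨S x w.1, by rw [length_S]; exact w.2.1, chain'_S _ _ w.2.2⟩
  have Finj : Function.Injective F := by
    intro w w' h
    exact Subtype.ext (S_inj x _ _ (w.2.1.trans w'.2.1.symm) (congrArg Subtype.val h))
  obtain ⟨i, j, hij, he⟩ :=
    Finite.exists_ne_map_eq_of_infinite (fun i : ℕ => F^[i])
  have key : ∀ i j : ℕ, i < j → F^[i] = F^[j] → ∀ w, F^[j - i] w = w := by
    intro i j hlt he w
    apply Function.Injective.iterate Finj i
    rw [← Function.iterate_add_apply, Nat.add_sub_cancel' hlt.le, ← he]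
  have hk : ∃ k : ℕ, 1 ≤ k ∧ ∀ w, F^[k] w = w := by
    rcases Nat.lt_or_ge i j with h | h
    · exact ⟨j - i, by omega, key i j h he⟩
    · have h' : j < i := by omega
      exact ⟨i - j, by omega, key j i h' he.symm⟩
  obtain ⟨k, hk1, hkid⟩ := hk
  have iter_val : ∀ (j : ℕ) (w : Wn n), (F^[j] w).1 = Sec (List.replicate j x) w.1 := by
    intro j
    induction j with
    | zero => intro w; rfl
    | succ j ih =>
        intro w
        rw [Function.iterate_succ_apply]
        rw [ih (F w)]
        rfl
  set w : Wn n := ⟨l, hn.symm, hc⟩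
  refine ⟨List.replicate (k - 1) x, ?_⟩
  have h1 : Sec (List.replicate (k-1) x) (S x l) = (F^[k-1] (F w)).1 := (iter_val (k-1) (F w)).symm
  rw [h1, ← Function.iterate_succ_apply]
  have h2 : (k - 1).succ = k := by omega
  rw [h2, hkid w]

lemma reach_rev (v : List Bool) (l : L3) (hc : l.Chain' (· ≠ ·)) : Reach (Sec v l) l := by
  induction v generalizing l with
  | nil => exact reach_refl l
  | cons x v ih =>
      show Reach (Sec v (S x l)) l
      exact (ih (S x l) (chain'_S _ _ hc)).trans (step_rev x l hc)

lemma Reach.symm {l m : L3} (hc : l.Chain' (· ≠ ·)) (h : Reach l m) : Reach m l := by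
  obtain ⟨v, rfl⟩ := h
  exact reach_rev v l hc

lemma fin3_match : ∀ c₁ c₂ d₁ d₂ h : Fin 3, c₁ ≠ c₂ → d₁ ≠ d₂ → c₁ ≠ h → c₂ ≠ h →
    d₁ ≠ h → d₂ ≠ h → ((c₁ = d₁ ∧ c₂ = d₂) ∨ (c₁ = d₂ ∧ c₂ = d₁)) := by decide

lemma fiber (n : ℕ)
    (htr : ∀ p q : L3, p.length = n → q.length = n → p.Chain' (· ≠ ·) → q.Chain' (· ≠ ·) →
      Reach p q) :
    ∀ (t : L3) (g₁ g₂ : Fin 3), t.length = n → g₁ ≠ g₂ →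
      (g₁ :: t).Chain' (· ≠ ·) → (g₂ :: t).Chain' (· ≠ ·) → Reach (g₁ :: t) (g₂ :: t) := by
  intro t g₁ g₂ hlen hne h1 h2
  cases n with
  | zero =>
      have ht : t = [] := List.length_eq_zero_iff.mp hlen
      subst ht
      fin_cases g₁ <;> fin_cases g₂ <;>
        first
          | exact absurd rfl hne
          | exact ⟨[false], rfl⟩
          | exact ⟨[false, false], rfl⟩
  | succ m =>
      obtain ⟨hd, tl, d₁, d₂, hlen', hchain', hdne, hd1, hd2, hswap⟩ := swap m
      have hct : t.Chain' (· ≠ ·) := (List.isChain_cons.mp h1).2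
      obtain ⟨v₀, hv₀⟩ := htr t (hd :: tl) hlen hlen' hct hchain'
      obtain ⟨c₁, hc₁⟩ := Sec_cons v₀ g₁ t
      obtain ⟨c₂, hc₂⟩ := Sec_cons v₀ g₂ t
      rw [hv₀] at hc₁ hc₂
      have hCne : c₁ ≠ c₂ := by
        intro h
        apply hne
        have heq : Sec v₀ (g₁ :: t) = Sec v₀ (g₂ :: t) := by rw [hc₁, hc₂, h]
        have := Sec_inj v₀ _ _ (by simp) heq
        exact (List.cons.injEq _ _ _ _ ▸ this).1
      have hch1 : (c₁ :: hd :: tl).Chain' (· ≠ ·) := hc₁ ▸ chain'_Sec v₀ _ h1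
      have hch2 : (c₂ :: hd :: tl).Chain' (· ≠ ·) := hc₂ ▸ chain'_Sec v₀ _ h2
      have hc1hd : c₁ ≠ hd := (List.isChain_cons_cons.mp hch1).1
      have hc2hd : c₂ ≠ hd := (List.isChain_cons_cons.mp hch2).1
      have hcore : Reach (c₁ :: hd :: tl) (c₂ :: hd :: tl) := by
        rcases fin3_match c₁ c₂ d₁ d₂ hd hCne hdne hc1hd hc2hd hd1 hd2 with ⟨e1, e2⟩ | ⟨e1, e2⟩
        · subst e1; subst e2; exact ⟨T, hswap⟩
        · subst e1; subst e2
          exact Reach.symm (List.isChain_cons_cons.mpr ⟨hd1, hchain'⟩) ⟨T, hswap⟩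
      have hstart : Reach (g₁ :: t) (c₁ :: hd :: tl) := ⟨v₀, hc₁⟩
      have hend : Reach (c₂ :: hd :: tl) (g₂ :: t) := Reach.symm h2 ⟨v₀, hc₂⟩
      exact (hstart.trans hcore).trans hend

lemma trans_all : ∀ (n : ℕ) (p q : L3), p.length = n → q.length = n →
    p.Chain' (· ≠ ·) → q.Chain' (· ≠ ·) → Reach p q := by
  intro n
  induction n with
  | zero =>
      intro p q hp hq _ _
      rw [List.length_eq_zero_iff.mp hp, List.length_eq_zero_iff.mp hq]
      exact reach_refl []
  | succ n ih =>
      intro p q hp hq hcp hcq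
      cases p with
      | nil => simp at hp
      | cons g u =>
        cases q with
        | nil => simp at hq
        | cons h t =>
          have hut := ih u t (by simpa using hp) (by simpa using hq)
            (List.isChain_cons.mp hcp).2 (List.isChain_cons.mp hcq).2
          obtain ⟨v, hv⟩ := hut
          obtain ⟨c, hc⟩ := Sec_cons v g u
          rw [hv] at hc
          have h1 : Reach (g :: u) (c :: t) := ⟨v, hc⟩
          have hchc : (c :: t).Chain' (· ≠ ·) := hc ▸ chain'_Sec v _ hcp
          by_cases hch : c = h
          · subst hch; exact h1
          · exact h1.trans (fiber n ih t c h (by simpa using hq) hch hchc hcq)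

def alt : ℕ → L3
  | 0 => []
  | k + 1 => (if k % 2 = 0 then 1 else 2) :: alt k

lemma length_alt (k : ℕ) : (alt k).length = k := by
  induction k with
  | zero => rfl
  | succ k ih => simp [alt, ih]

lemma pa_alt (k : ℕ) : pa (alt k) = false := by
  induction k with
  | zero => rfl
  | succ k ih =>
      rcases Nat.mod_two_eq_zero_or_one k with h | h <;>
        simp [alt, pa, h, ih]

lemma chain'_alt (k : ℕ) : (alt k).Chain' (· ≠ ·) := by
  induction k with
  | zero => simp [alt, List.Chain']
  | succ k ih =>
      cases k with
      | zero => simp [alt, List.Chain']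
      | succ j =>
          refine List.isChain_cons_cons.mpr ⟨?_, ih⟩
          show (if (j+1) % 2 = 0 then (1 : Fin 3) else 2) ≠ (if j % 2 = 0 then 1 else 2)
          rcases Nat.mod_two_eq_zero_or_one j with h | h
          · have h1 : (j + 1) % 2 = 1 := by omega
            rw [h, h1]; decide
          · have h1 : (j + 1) % 2 = 0 := by omega
            rw [h, h1]; decide

lemma chain'_oddw (n : ℕ) : ((0 : Fin 3) :: alt n).Chain' (· ≠ ·) := by
  refine List.isChain_cons.mpr ⟨?_, chain'_alt n⟩
  intro y hy
  cases n with
  | zero => simp [alt] at hy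
  | succ k =>
      have h' : (if k % 2 = 0 then (1 : Fin 3) else 2) = y := by
        simpa [alt] using hy
      rw [← h']
      split <;> decide

lemma pa_oddw (n : ℕ) : pa ((0 : Fin 3) :: alt n) = true := by
  show xor (decide ((0 : Fin 3) = 0)) (pa (alt n)) = true
  rw [pa_alt]; rfl

lemma reach_odd (l : L3) (h0 : l ≠ []) (hc : l.Chain' (· ≠ ·)) :
    ∃ v : List Bool, pa (Sec v l) = true := by
  have hpos : 0 < l.length := List.length_pos_iff.mpr h0
  obtain ⟨v, hv⟩ := trans_all l.length l ((0 : Fin 3) :: alt (l.length - 1)) rfl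
    (by simp [length_alt]; omega) hc (chain'_oddw _)
  exact ⟨v, by rw [hv]; exact pa_oddw _⟩

section Act

variable {a b c : Equiv.Perm (List Bool)}

lemma sq_all (ha : WRec true a c c) (hb : WRec false b a b) (hc : WRec false c b a) :
    ∀ w : List Bool, a (a w) = w ∧ b (b w) = w ∧ c (c w) = w := by
  have ha1 : ∀ w, a (false :: w) = true :: c w := ha.2.1
  have ha2 : ∀ w, a (true :: w) = false :: c w := ha.2.2
  have hb1 : ∀ w, b (false :: w) = false :: a w := hb.2.1
  have hb2 : ∀ w, b (true :: w) = true :: b w := hb.2.2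
  have hc1 : ∀ w, c (false :: w) = false :: b w := hc.2.1
  have hc2 : ∀ w, c (true :: w) = true :: a w := hc.2.2
  intro w
  induction w with
  | nil => exact ⟨by rw [ha.1, ha.1], by rw [hb.1, hb.1], by rw [hc.1, hc.1]⟩
  | cons x w ih =>
      cases x
      · exact ⟨by rw [ha1, ha2, ih.2.2],
               by rw [hb1, hb1, ih.1],
               by rw [hc1, hc1, ih.2.1]⟩
      · exact ⟨by rw [ha2, ha1, ih.2.2],
               by rw [hb2, hb2, ih.2.1],
               by rw [hc2, hc2, ih.1]⟩

lemma prod_nil (ha : WRec true a c c) (hb : WRec false b a b) (hc : WRec false c b a) :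
    ∀ l : L3, (l.map ![a, b, c]).prod [] = [] := by
  intro l
  induction l with
  | nil => rfl
  | cons g l ih =>
      rw [List.map_cons, List.prod_cons, Equiv.Perm.mul_apply, ih]
      have hg : g = 0 ∨ g = 1 ∨ g = 2 := by omega
      rcases hg with rfl | rfl | rfl
      · exact ha.1
      · exact hb.1
      · exact hc.1

lemma act (ha : WRec true a c c) (hb : WRec false b a b) (hc : WRec false c b a) :
    ∀ (l : L3) (x : Bool) (w : List Bool),
      (l.map ![a, b, c]).prod (x :: w) =
        (xor x (pa l)) :: ((S x l).map ![a, b, c]).prod w := by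
  intro l
  induction l with
  | nil => intro x w; simp [pa, S]
  | cons g l ih =>
      intro x w
      rw [List.map_cons, List.prod_cons, Equiv.Perm.mul_apply, ih]
      have hS : ∀ g : Fin 3, S x (g :: l) = sec (xor x (pa l)) g :: S x l := fun _ => rfl
      have hpa : ∀ g : Fin 3, pa (g :: l) = xor (decide (g = 0)) (pa l) := fun _ => rfl
      have hg : g = 0 ∨ g = 1 ∨ g = 2 := by omega
      rcases hg with rfl | rfl | rfl <;> rw [hS, hpa] <;> cases x <;> cases hpl : pa l <;>
        first
          | exact ha.2.1 _
          | exact ha.2.2 _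
          | exact hb.2.1 _
          | exact hb.2.2 _
          | exact hc.2.1 _
          | exact hc.2.2 _

lemma triv_propagate (ha : WRec true a c c) (hb : WRec false b a b) (hc : WRec false c b a)
    {l : L3} (h1 : (l.map ![a, b, c]).prod = 1) :
    pa l = false ∧ ∀ x : Bool, ((S x l).map ![a, b, c]).prod = 1 := by
  constructor
  · have := act ha hb hc l false []
    rw [h1] at this
    simp only [Equiv.Perm.one_apply] at this
    have h2 := (List.cons.injEq _ _ _ _ ▸ this).1
    simp only [Bool.false_xor] at h2
    exact h2.symm
  · intro x
    apply Equiv.ext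
    intro w
    have := act ha hb hc l x w
    rw [h1] at this
    simp only [Equiv.Perm.one_apply] at this
    have h2 := (List.cons.injEq _ _ _ _ ▸ this).2
    rw [Equiv.Perm.one_apply, ← h2]

lemma triv_Sec (ha : WRec true a c c) (hb : WRec false b a b) (hc : WRec false c b a)
    (v : List Bool) : ∀ l : L3, (l.map ![a, b, c]).prod = 1 →
      ((Sec v l).map ![a, b, c]).prod = 1 := by
  induction v with
  | nil => intro l h; exact h
  | cons x v ih =>
      intro l h
      exact ih (S x l) ((triv_propagate ha hb hc h).2 x)

lemma nontrivial_word (ha : WRec true a c c) (hb : WRec false b a b) (hc : WRec false c b a)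
    (l : L3) (h0 : l ≠ []) (hchain : l.Chain' (· ≠ ·)) :
    (l.map ![a, b, c]).prod ≠ 1 := by
  intro h1
  obtain ⟨v, hv⟩ := reach_odd l h0 hchain
  have h2 := triv_Sec ha hb hc v l h1
  have h3 := (triv_propagate ha hb hc h2).1
  rw [hv] at h3
  simp at h3

end Act
end Bellaterra

open Bellaterra

/-- Let `a, b, c` be the tree automorphisms defined by the wreath
recursion `a = σ(c,c)`, `b = (a,b)`, `c = (b,a)` (the Bellaterra automaton).  Then
`a² = b² = c² = 1`, the canonical homomorphism `C₂ * C₂ * C₂ → ⟨a,b,c⟩` sending the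
generators of the three free factors to `a`, `b`, `c` is an isomorphism, and every
nonempty word over `{a,b,c}` with no two consecutive equal letters represents a
nontrivial element. -/
theorem bellaterra_generates_free_product (a b c : Equiv.Perm (List Bool))
    (ha : WRec true a c c) (hb : WRec false b a b) (hc : WRec false c b a) :
    a * a = 1 ∧ b * b = 1 ∧ c * c = 1 ∧
    (∃ ψ : PresentedGroup freeProductC2Rels →* Subgroup.closure {a, b, c},
      Function.Bijective ψ ∧
      (ψ (PresentedGroup.of 0) : Equiv.Perm (List Bool)) = a ∧
      (ψ (PresentedGroup.of 1) : Equiv.Perm (List Bool)) = b ∧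
      (ψ (PresentedGroup.of 2) : Equiv.Perm (List Bool)) = c) ∧
    (∀ l : List (Fin 3), l ≠ [] → l.Chain' (· ≠ ·) → (l.map ![a, b, c]).prod ≠ 1) := by
  have ha2 : a * a = 1 := Equiv.ext fun w => by
    rw [Equiv.Perm.mul_apply, (sq_all ha hb hc w).1, Equiv.Perm.one_apply]
  have hb2 : b * b = 1 := Equiv.ext fun w => by
    rw [Equiv.Perm.mul_apply, (sq_all ha hb hc w).2.1, Equiv.Perm.one_apply]
  have hc2 : c * c = 1 := Equiv.ext fun w => by
    rw [Equiv.Perm.mul_apply, (sq_all ha hb hc w).2.2, Equiv.Perm.one_apply]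
  have hmain := nontrivial_word ha hb hc
  refine ⟨ha2, hb2, hc2, ?_, hmain⟩
  have hrels : ∀ r ∈ freeProductC2Rels, FreeGroup.lift ![a, b, c] r = 1 := by
    intro r hr
    simp only [freeProductC2Rels, Set.mem_insert_iff, Set.mem_singleton_iff] at hr
    rcases hr with rfl | rfl | rfl <;> rw [map_pow, FreeGroup.lift_apply_of, pow_two]
    · exact ha2
    · exact hb2
    · exact hc2
  let φ : PresentedGroup freeProductC2Rels →* Equiv.Perm (List Bool) :=
    PresentedGroup.toGroup hrels
  have hofval : ∀ i : Fin 3, φ (PresentedGroup.of i) = ![a, b, c] i := fun i =>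
    PresentedGroup.toGroup.of hrels
  have hmem : ∀ x, φ x ∈ Subgroup.closure {a, b, c} := by
    intro x
    refine PresentedGroup.generated_by _ (Subgroup.comap φ (Subgroup.closure {a, b, c})) ?_ x
    intro j
    simp only [Subgroup.mem_comap, hofval]
    apply Subgroup.subset_closure
    fin_cases j <;> simp
  let ψ : PresentedGroup freeProductC2Rels →* ↥(Subgroup.closure {a, b, c}) :=
    φ.codRestrict _ hmem
  have hψval : ∀ x, (ψ x : Equiv.Perm (List Bool)) = φ x := fun _ => rfl
  have hsq1 : ∀ i : Fin 3, (PresentedGroup.of (rels := freeProductC2Rels) i) *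
      PresentedGroup.of i = 1 := by
    intro i
    have hmem2 : ((FreeGroup.of i) ^ 2 : FreeGroup (Fin 3)) ∈
        Subgroup.normalClosure freeProductC2Rels := by
      apply Subgroup.subset_normalClosure
      fin_cases i <;> simp [freeProductC2Rels]
    have h2 : (PresentedGroup.mk freeProductC2Rels) ((FreeGroup.of i) ^ 2) = 1 :=
      (QuotientGroup.eq_one_iff _).mpr hmem2
    rw [map_pow, pow_two] at h2
    exact h2
  have hconcat : ∀ l₁ : List (Fin 3), l₁.Chain' (· ≠ ·) → ∀ l₂ : List (Fin 3),
      l₂.Chain' (· ≠ ·) →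
      ∃ l : List (Fin 3), l.Chain' (· ≠ ·) ∧
        (l.map (PresentedGroup.of (rels := freeProductC2Rels))).prod =
        (l₁.map PresentedGroup.of).prod * (l₂.map PresentedGroup.of).prod := by
    intro l₁
    induction l₁ using List.reverseRecOn with
    | nil => intro _ l₂ h₂; exact ⟨l₂, h₂, by simp⟩
    | append_singleton l₁ g ih =>
        intro h₁ l₂ h₂
        cases l₂ with
        | nil => exact ⟨l₁ ++ [g], h₁, by simp⟩
        | cons g₂ l₂' =>
            by_cases hg : g = g₂
            · subst hg
              have hch₁ : l₁.Chain' (· ≠ ·) := (List.isChain_append.mp h₁).1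
              have hch₂ : l₂'.Chain' (· ≠ ·) := (List.isChain_cons.mp h₂).2
              obtain ⟨l, hl, he⟩ := ih hch₁ l₂' hch₂
              refine ⟨l, hl, ?_⟩
              rw [he]
              simp only [List.map_append, List.prod_append, List.map_cons, List.prod_cons,
                List.map_nil, List.prod_nil, mul_one]
              rw [mul_assoc, ← mul_assoc (PresentedGroup.of g), hsq1 g, one_mul]
            · refine ⟨(l₁ ++ [g]) ++ g₂ :: l₂', ?_,
                by simp [List.map_append, List.prod_append, mul_assoc]⟩
              unfold List.Chain'
              rw [List.isChain_append]
              refine ⟨h₁, h₂, ?_⟩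
              intro x hx y hy
              rw [List.getLast?_concat] at hx
              have hx' : x = g := by symm; simpa using hx
              have hy' : y = g₂ := by symm; simpa using hy
              rw [hx', hy']; exact hg
  have hNF : ∀ x : PresentedGroup freeProductC2Rels, ∃ l : List (Fin 3),
      l.Chain' (· ≠ ·) ∧ x = (l.map PresentedGroup.of).prod := by
    intro x
    induction x using PresentedGroup.induction_on with
    | _ z =>
      induction z using FreeGroup.induction_on with
      | C1 => exact ⟨[], List.isChain_nil, by simp⟩
      | of i => exact ⟨[i], List.isChain_singleton _, by simp; rfl⟩
      | inv_of i _ =>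
          refine ⟨[i], List.isChain_singleton _, ?_⟩
          simp only [List.map_cons, List.map_nil, List.prod_cons, List.prod_nil, mul_one]
          rw [map_inv]
          exact inv_eq_of_mul_eq_one_right (hsq1 i)
      | mul z w ihz ihw =>
          obtain ⟨l₁, h₁, e₁⟩ := ihz
          obtain ⟨l₂, h₂, e₂⟩ := ihw
          obtain ⟨l, hl, he⟩ := hconcat l₁ h₁ l₂ h₂
          exact ⟨l, hl, by rw [map_mul, e₁, e₂, he]⟩
  have hinj : Function.Injective ψ := by
    apply (injective_iff_map_eq_one ψ).mpr
    intro x hx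
    obtain ⟨l, hlc, rfl⟩ := hNF x
    by_cases hl : l = []
    · subst hl; simp
    · exfalso
      apply hmain l hl hlc
      have hval : φ ((l.map PresentedGroup.of).prod) = 1 := by
        have := congrArg (Subtype.val) hx
        rw [hψval] at this
        exact this
      rw [map_list_prod, List.map_map] at hval
      have hmap : l.map (⇑φ ∘ PresentedGroup.of) = l.map ![a, b, c] := by
        apply List.map_congr_left
        intro i _
        simp only [Function.comp_apply, hofval]
      rwa [hmap] at hval
  have hsurj : Function.Surjective ψ := by
    rintro ⟨g, hg⟩
    refine Subgroup.closure_induction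
      (p := fun g hg => ∃ x, ψ x = ⟨g, hg⟩) ?_ ?_ ?_ ?_ hg
    · intro x hx
      simp only [Set.mem_insert_iff, Set.mem_singleton_iff] at hx
      rcases hx with rfl | rfl | rfl
      · exact ⟨PresentedGroup.of 0, Subtype.ext (by rw [hψval, hofval]; rfl)⟩
      · exact ⟨PresentedGroup.of 1, Subtype.ext (by rw [hψval, hofval]; rfl)⟩
      · exact ⟨PresentedGroup.of 2, Subtype.ext (by rw [hψval, hofval]; rfl)⟩
    · exact ⟨1, by rw [map_one]; rfl⟩
    · rintro x y hx hy ⟨x', ex⟩ ⟨y', ey⟩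
      exact ⟨x' * y', by rw [map_mul, ex, ey]; rfl⟩
    · rintro x hx ⟨x', ex⟩
      exact ⟨x'⁻¹, by rw [map_inv, ex]; rfl⟩
  refine ⟨ψ, ⟨hinj, hsurj⟩, ?_, ?_, ?_⟩
  · rw [hψval, hofval]; rfl
  · rw [hψval, hofval]; rfl
  · rw [hψval, hofval]; rfl
end

section
/- Let a, b, c ∈ Aut(X*) be defined by the wreath recursion a = σ(c,b), b = (b,b), c = (a,a). Then b = 1, a and c commute, and G = ⟨a,b,c⟩ = ⟨a,c⟩ is free abelian of rank 2: the relation aᵐcⁿ = 1 holds only for m = n = 0, so the map ℤ² → G, (m,n) ↦ aᵐcⁿ, is a group isomorphism. -/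
/-- Pairs `(g, h)` of permutations of `List Bool` with `g (x :: w) = x :: h w`,
i.e. `g = (h, h)` as a wreath recursion.  They form a subgroup of the product. -/
def secSubgroup : Subgroup (Equiv.Perm (List Bool) × Equiv.Perm (List Bool)) where
  carrier := {p | ∀ (x : Bool) (w : List Bool), p.1 (x :: w) = x :: p.2 w}
  one_mem' := by intro x w; rfl
  mul_mem' := by
    intro p q hp hq x w
    show p.1 (q.1 (x :: w)) = x :: p.2 (q.2 w)
    rw [hq, hp]
  inv_mem' := by
    intro p hp x w
    show p.1⁻¹ (x :: w) = x :: p.2⁻¹ w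
    have h1 : p.1 (x :: p.2⁻¹ w) = x :: w := by
      rw [hp]
      simp
    rw [← h1, ← Equiv.Perm.mul_apply, inv_mul_cancel, Equiv.Perm.one_apply]

lemma sec_zpow {g h : Equiv.Perm (List Bool)}
    (H : ∀ (x : Bool) (w : List Bool), g (x :: w) = x :: h w) (k : ℤ) :
    ∀ (x : Bool) (w : List Bool), (g ^ k) (x :: w) = x :: (h ^ k) w := by
  have hmem : (g, h) ∈ secSubgroup := H
  have hk := zpow_mem hmem k
  intro x w
  exact hk x w

lemma fix_zpow {α : Type*} {g : Equiv.Perm α} {x : α} (h : g x = x) (k : ℤ) :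
    (g ^ k) x = x := by
  have hx : g ∈ MulAction.stabilizer (Equiv.Perm α) x := by
    simp [MulAction.mem_stabilizer_iff, Equiv.Perm.smul_def, h]
  have hk := zpow_mem hx k
  simpa [MulAction.mem_stabilizer_iff, Equiv.Perm.smul_def] using hk

/-- Let `a, b, c` be the tree automorphisms defined by the wreath
recursion `a = σ(c,b)`, `b = (b,b)`, `c = (a,a)`.  Then `b = 1`, `a` and `c` commute,
`G = ⟨a,b,c⟩ = ⟨a,c⟩` and `G` is free abelian of rank 2: `aᵐcⁿ = 1` only for
`m = n = 0`, and `(m,n) ↦ aᵐcⁿ` is a group isomorphism `ℤ² ≃ G`. -/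
theorem generates_free_abelian_of_rank_two (a b c : Equiv.Perm (List Bool))
    (ha : WRec true a c b) (hb : WRec false b b b) (hc : WRec false c a a) :
    b = 1 ∧
    a * c = c * a ∧
    Subgroup.closure {a, b, c} = Subgroup.closure {a, c} ∧
    (∀ m n : ℤ, a ^ m * c ^ n = 1 → m = 0 ∧ n = 0) ∧
    ∃ e : Multiplicative (ℤ × ℤ) ≃* Subgroup.closure {a, b, c},
      ∀ p : ℤ × ℤ,
        (e (Multiplicative.ofAdd p) : Equiv.Perm (List Bool)) = a ^ p.1 * c ^ p.2 := by
  obtain ⟨ha0, haf, hat⟩ := ha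
  obtain ⟨hb0, hbf, hbt⟩ := hb
  obtain ⟨hc0, hcf, hct⟩ := hc
  simp only [Bool.not_true, Bool.not_false] at hat hbt hct
  -- b = 1
  have hbw : ∀ w : List Bool, b w = w := by
    intro w
    induction w with
    | nil => exact hb0
    | cons x t ih =>
      cases x
      · rw [hbf t, ih]
      · rw [hbt t, ih]
  have hb1 : b = 1 := Equiv.ext fun w => hbw w
  -- rewrite a's section at `true` using b = 1
  have hat' : ∀ w : List Bool, a (true :: w) = false :: w := by
    intro w; rw [hat w, hbw w]
  -- a and c commute pointwise
  have hac : ∀ w : List Bool, a (c w) = c (a w) := by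
    intro w
    induction w with
    | nil => rw [hc0, ha0, hc0]
    | cons x t ih =>
      cases x
      · rw [hcf t, haf t, haf (a t), hct (c t), ih]
      · rw [hct t, hat' (a t), hat' t, hcf t]
  have hcomm : Commute a c := Equiv.ext fun w => by
    simp only [Equiv.Perm.mul_apply]
    exact hac w
  -- a^2 = (c, c)
  have ha2 : ∀ (x : Bool) (w : List Bool), (a ^ 2) (x :: w) = x :: c w := by
    intro x w
    have h2 : (a ^ 2) (x :: w) = a (a (x :: w)) := by rw [pow_two]; rfl
    rw [h2]
    cases x
    · rw [haf w, hat' (c w)]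
    · rw [hat' w, haf w]
  -- c = (a, a)
  have hcsec : ∀ (x : Bool) (w : List Bool), c (x :: w) = x :: a w := by
    intro x w
    cases x
    · exact hcf w
    · exact hct w
  -- basic fixed points / values
  have hcfix : c [false] = [false] := by rw [hcf [], ha0]
  have hafv : a [false] = [true] := by rw [haf [], hc0]
  have ha2fix : (a ^ 2) [false] = [false] := by rw [ha2 false [], hc0]
  have ha2fixt : (a ^ 2) [true] = [true] := by rw [ha2 true [], hc0]
  -- odd powers of a move [false]
  have haodd : ∀ k : ℤ, (a ^ (2 * k + 1)) [false] = [true] := by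
    intro k
    have h1 : a ^ (2 * k + 1) = (a ^ 2) ^ k * a := by
      rw [zpow_add, ← zpow_natCast a 2, ← zpow_mul, zpow_one]
      norm_num
    have h2 : ((a ^ 2) ^ k * a) [false] = ((a ^ 2) ^ k) (a [false]) := rfl
    rw [h1, h2, hafv, fix_zpow ha2fixt k]
  -- key descent
  have key : ∀ N : ℕ, ∀ m n : ℤ, 2 * m.natAbs + 3 * n.natAbs ≤ N →
      a ^ m * c ^ n = 1 → m = 0 ∧ n = 0 := by
    intro N
    induction N with
    | zero =>
      intro m n hμ _
      constructor <;> (rw [← Int.natAbs_eq_zero]; omega)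
    | succ N ih =>
      intro m n hμ h1
      rcases Int.even_or_odd m with ⟨m', hm'⟩ | ⟨m', hm'⟩
      · -- m = m' + m'
        by_cases h0 : m' = 0 ∧ n = 0
        · exact ⟨by omega, h0.2⟩
        · -- sections: a^m * c^n has sections c^{m'} * a^n
          have hsa : ∀ (x : Bool) (w : List Bool),
              (a ^ m) (x :: w) = x :: (c ^ m') w := by
            have h2 : a ^ m = (a ^ 2) ^ m' := by
              have hmm : m = 2 * m' := by omega
              have h22 : (a : Equiv.Perm (List Bool)) ^ (2 : ℤ) = a ^ 2 := by
                rw [zpow_two, pow_two]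
              rw [hmm, zpow_mul, h22]
            intro x w
            rw [h2]
            exact sec_zpow ha2 m' x w
          have hsc : ∀ (x : Bool) (w : List Bool),
              (c ^ n) (x :: w) = x :: (a ^ n) w := sec_zpow hcsec n
          have hsec : ∀ w : List Bool, (c ^ m' * a ^ n) w = w := by
            intro w
            have h3 : (a ^ m * c ^ n) (false :: w) = (a ^ m) ((c ^ n) (false :: w)) := rfl
            rw [h1] at h3
            rw [hsc, hsa] at h3
            simpa using h3.symm
          have hone : a ^ n * c ^ m' = 1 := by
            rw [(hcomm.zpow_zpow n m').eq]
            exact Equiv.ext fun w => hsec w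
          have hNA : m.natAbs = 2 * m'.natAbs := by
            have hmm : m = 2 * m' := by omega
            rw [hmm, Int.natAbs_mul]
            rfl
          have hlt : 2 * n.natAbs + 3 * m'.natAbs ≤ N := by
            have h0' : m'.natAbs ≠ 0 ∨ n.natAbs ≠ 0 := by
              rcases not_and_or.mp h0 with h | h
              · left; simpa [Int.natAbs_eq_zero] using h
              · right; simpa [Int.natAbs_eq_zero] using h
            omega
          obtain ⟨hn0, hm'0⟩ := ih n m' hlt hone
          exact ⟨by omega, hn0⟩
      · -- m = 2 * m' + 1 : contradiction
        exfalso
        have h2 : (a ^ m * c ^ n) [false] = (a ^ m) ((c ^ n) [false]) := rfl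
        rw [h1] at h2
        rw [fix_zpow hcfix n, hm', haodd m'] at h2
        simp at h2
  have keyfin : ∀ m n : ℤ, a ^ m * c ^ n = 1 → m = 0 ∧ n = 0 := fun m n h =>
    key (2 * m.natAbs + 3 * n.natAbs) m n le_rfl h
  -- closure equality
  have hclo : Subgroup.closure {a, b, c} = Subgroup.closure {a, c} := by
    rw [hb1]
    apply le_antisymm
    · rw [Subgroup.closure_le]
      intro x hx
      rcases hx with h | h | h
      · exact Subgroup.subset_closure (by simp [h])
      · rw [h]
        exact SetLike.mem_coe.mpr (Subgroup.one_mem _)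
      · exact Subgroup.subset_closure (by simp [h])
    · apply Subgroup.closure_mono
      intro x hx
      rcases hx with h | h <;> simp [h]
  -- the homomorphism
  let φ : Multiplicative (ℤ × ℤ) →* Equiv.Perm (List Bool) :=
    { toFun := fun p => a ^ (Multiplicative.toAdd p).1 * c ^ (Multiplicative.toAdd p).2
      map_one' := by simp
      map_mul' := by
        intro p q
        show a ^ ((Multiplicative.toAdd p).1 + (Multiplicative.toAdd q).1) *
            c ^ ((Multiplicative.toAdd p).2 + (Multiplicative.toAdd q).2) = _
        rw [zpow_add, zpow_add]
        exact (hcomm.zpow_zpow (Multiplicative.toAdd q).1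
          (Multiplicative.toAdd p).2).mul_mul_mul_comm _ _ }
  have hrange : ∀ p, φ p ∈ Subgroup.closure {a, b, c} := by
    intro p
    rw [hclo]
    exact mul_mem (zpow_mem (Subgroup.subset_closure (by simp)) _)
      (zpow_mem (Subgroup.subset_closure (by simp)) _)
  let φ' : Multiplicative (ℤ × ℤ) →* Subgroup.closure {a, b, c} :=
    φ.codRestrict _ hrange
  have hinj : Function.Injective φ' := by
    rw [injective_iff_map_eq_one]
    intro p hp
    have h1 : φ p = 1 := congrArg Subtype.val hp
    obtain ⟨h1', h2'⟩ := keyfin _ _ h1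
    have h3 : Multiplicative.toAdd p = 0 := Prod.ext h1' h2'
    calc p = Multiplicative.ofAdd (Multiplicative.toAdd p) := rfl
    _ = Multiplicative.ofAdd 0 := by rw [h3]
    _ = 1 := rfl
  have hsurj : Function.Surjective φ' := by
    rintro ⟨g, hg⟩
    have hg' : g ∈ Subgroup.closure {a, c} := hclo ▸ hg
    have hle : Subgroup.closure {a, c} ≤ φ.range := by
      rw [Subgroup.closure_le]
      intro x hx
      rcases hx with h | h
      · exact ⟨Multiplicative.ofAdd (1, 0), by simp [φ, ← h]⟩
      · simp only [Set.mem_singleton_iff] at h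
        exact ⟨Multiplicative.ofAdd (0, 1), by simp [φ, h]⟩
    obtain ⟨p, hp⟩ := hle hg'
    exact ⟨p, Subtype.ext hp⟩
  exact ⟨hb1, hcomm.eq, hclo, keyfin,
    MulEquiv.ofBijective φ' ⟨hinj, hsurj⟩, fun p => rfl⟩
end

section
/- Let a, b, c ∈ Aut(X*) be defined by the wreath recursion a = σ(c,c), b = (c,c), c = (b,a), and let G = ⟨a,b,c⟩. Then a² = b² = c² = 1, the subgroup H = ⟨ac, cb⟩ is normal of index 2 in G, conjugation by c inverts both generators ac and cb of H, and H is isomorphic to the lamplighter group ℤ ≀ C₂ = (⊕_{i∈ℤ} ℤ/2ℤ) ⋊ ℤ; consequently G ≅ C₂ ⋉ (ℤ ≀ C₂). -/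
/-- The translation `a ↦ a + n` of `ℤ`. -/
def shiftE (n : ℤ) : ℤ ≃ ℤ where
  toFun a := a + n
  invFun a := a - n
  left_inv a := by show a + n - n = a; omega
  right_inv a := by show a - n + n = a; omega

/-- The shift by `n` of a finitely supported function `ℤ →₀ ZMod 2`
(an element of `⊕_{i ∈ ℤ} ℤ/2ℤ`). -/
def shiftF (n : ℤ) (f : ℤ →₀ ZMod 2) : ℤ →₀ ZMod 2 :=
  Finsupp.equivMapDomain (shiftE n) f

theorem shiftF_apply (n : ℤ) (f : ℤ →₀ ZMod 2) (a : ℤ) : shiftF n f a = f (a - n) := rfl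

theorem shiftF_add (n : ℤ) (f g : ℤ →₀ ZMod 2) :
    shiftF n (f + g) = shiftF n f + shiftF n g := by
  ext a
  simp [shiftF_apply]

theorem shiftF_shiftF (m n : ℤ) (f : ℤ →₀ ZMod 2) :
    shiftF m (shiftF n f) = shiftF (m + n) f := by
  ext a
  rw [shiftF_apply, shiftF_apply, shiftF_apply]
  congr 1
  omega

theorem shiftF_zero (f : ℤ →₀ ZMod 2) : shiftF 0 f = f := by
  ext a
  rw [shiftF_apply, sub_zero]

theorem shiftF_zero_fun (n : ℤ) : shiftF n 0 = 0 := by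
  ext a
  rw [shiftF_apply]
  rfl

/-- The lamplighter group `ℤ ≀ C₂`, i.e. the restricted wreath product
`(⊕_{i ∈ ℤ} ℤ/2ℤ) ⋊ ℤ` where `ℤ` acts by shifting the coordinates.  It is realized
concretely as the set of pairs `(f, m)` with `f : ℤ →₀ ZMod 2` a finitely supported
function (an element of `⊕_{i ∈ ℤ} ℤ/2ℤ`) and `m : ℤ`, with the semidirect product
multiplication `(f, m) · (g, n) = (f + shift_m g, m + n)`. -/
structure Lamplighter where
  lamps : ℤ →₀ ZMod 2
  pos : ℤ

namespace Lamplighter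

noncomputable instance : Mul Lamplighter :=
  ⟨fun x y => ⟨x.lamps + shiftF x.pos y.lamps, x.pos + y.pos⟩⟩
instance : One Lamplighter := ⟨⟨0, 0⟩⟩
noncomputable instance : Inv Lamplighter :=
  ⟨fun x => ⟨shiftF (-x.pos) (-x.lamps), -x.pos⟩⟩

@[simp] theorem mul_lamps (x y : Lamplighter) :
    (x * y).lamps = x.lamps + shiftF x.pos y.lamps := rfl
@[simp] theorem mul_pos (x y : Lamplighter) : (x * y).pos = x.pos + y.pos := rfl
@[simp] theorem one_lamps : (1 : Lamplighter).lamps = 0 := rfl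
@[simp] theorem one_pos : (1 : Lamplighter).pos = 0 := rfl
@[simp] theorem inv_lamps (x : Lamplighter) : x⁻¹.lamps = shiftF (-x.pos) (-x.lamps) := rfl
@[simp] theorem inv_pos (x : Lamplighter) : x⁻¹.pos = -x.pos := rfl

@[ext] theorem ext {x y : Lamplighter} (h₁ : x.lamps = y.lamps) (h₂ : x.pos = y.pos) :
    x = y := by
  cases x; cases y; cases h₁; cases h₂; rfl

noncomputable instance : Group Lamplighter where
  mul := (· * ·)
  one := 1
  inv := (·⁻¹)
  mul_assoc x y z := by
    ext
    · simp [shiftF_add, shiftF_shiftF, add_assoc]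
    · simp [add_assoc]
  one_mul x := by
    ext
    · simp [shiftF_zero]
    · simp
  mul_one x := by
    ext
    · simp [shiftF_zero_fun]
    · simp
  inv_mul_cancel x := by
    ext
    · rw [mul_lamps, inv_lamps, inv_pos, ← shiftF_add, neg_add_cancel, shiftF_zero_fun,
        one_lamps]
    · rw [mul_pos, inv_pos, neg_add_cancel, one_pos]

end Lamplighter


namespace S19

/-! ### Coordinate flips -/

def flipb : (ℕ → Bool) → List Bool → List Bool
  | _, [] => []
  | S, x :: w => (xor x (S 0)) :: flipb (fun k => S (k + 1)) w

@[simp] theorem flipb_nil (S : ℕ → Bool) : flipb S [] = [] := rfl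

@[simp] theorem flipb_cons (S : ℕ → Bool) (x : Bool) (w : List Bool) :
    flipb S (x :: w) = (xor x (S 0)) :: flipb (fun k => S (k + 1)) w := rfl

theorem flipb_congr {S T : ℕ → Bool} (h : ∀ n, S n = T n) (w : List Bool) :
    flipb S w = flipb T w := by
  have : S = T := funext h
  subst this; rfl

theorem flipb_flipb (S T : ℕ → Bool) (w : List Bool) :
    flipb S (flipb T w) = flipb (fun n => xor (S n) (T n)) w := by
  induction w generalizing S T with
  | nil => rfl
  | cons x w ih =>
    simp only [flipb_cons]
    refine congrArg₂ _ ?_ (ih _ _)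
    cases x <;> cases S 0 <;> cases T 0 <;> rfl

theorem flipb_zero (w : List Bool) : flipb (fun _ => false) w = w := by
  induction w with
  | nil => rfl
  | cons x w ih => simp [flipb_cons, ih]

theorem flipb_invol (S : ℕ → Bool) (w : List Bool) : flipb S (flipb S w) = w := by
  rw [flipb_flipb, flipb_congr (fun n => Bool.xor_self (S n)), flipb_zero]

def flipPerm (S : ℕ → Bool) : Equiv.Perm (List Bool) :=
  ⟨flipb S, flipb S, flipb_invol S, flipb_invol S⟩

@[simp] theorem flipPerm_apply (S : ℕ → Bool) (w : List Bool) : flipPerm S w = flipb S w := rfl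

theorem flipPerm_mul (S T : ℕ → Bool) :
    flipPerm S * flipPerm T = flipPerm (fun n => xor (S n) (T n)) :=
  Equiv.ext fun w => flipb_flipb S T w

theorem flipPerm_inv (S : ℕ → Bool) : (flipPerm S)⁻¹ = flipPerm S := rfl

theorem flipPerm_zero : flipPerm (fun _ => false) = 1 := Equiv.ext flipb_zero

theorem flipPerm_comm (S T : ℕ → Bool) :
    flipPerm S * flipPerm T = flipPerm T * flipPerm S := by
  rw [flipPerm_mul, flipPerm_mul]
  exact congrArg _ (funext fun n => Bool.xor_comm _ _)

theorem flipb_inj_aux : ∀ (n : ℕ) (S T : ℕ → Bool),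
    (∀ w, flipb S w = flipb T w) → S n = T n := by
  intro n
  induction n with
  | zero =>
    intro S T h
    have := h [false]
    simpa using this
  | succ n ih =>
    intro S T h
    have key : ∀ w, flipb (fun k => S (k + 1)) w = flipb (fun k => T (k + 1)) w := by
      intro w
      have h2 := h (false :: w)
      simp only [flipb_cons, List.cons.injEq] at h2
      exact h2.2
    exact ih (fun k => S (k + 1)) (fun k => T (k + 1)) key

theorem flipPerm_injective : Function.Injective flipPerm := by
  intro S T h
  refine funext fun n => flipb_inj_aux n S T fun w => ?_
  have := congrArg (fun (e : Equiv.Perm (List Bool)) => e w) h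
  simpa using this

/-! ### The set transformers -/

def Dset : ℕ → Bool := fun n => decide (n = 0)
def Eset : ℕ → Bool := fun n => decide (n < 2)

def Th : Bool → (ℕ → Bool) → ℕ → Bool
  | _, S, 0 => S 0
  | true, S, n + 1 => xor (S 0 && decide (n < 2)) (Th false (fun k => S (k + 1)) n)
  | false, S, n + 1 => xor (S 0 && decide (n = 0)) (Th true (fun k => S (k + 1)) n)

@[simp] theorem Th_zero (fl : Bool) (S : ℕ → Bool) : Th fl S 0 = S 0 := by cases fl <;> rfl

theorem Th_true_succ (S : ℕ → Bool) (n : ℕ) :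
    Th true S (n + 1) = xor (S 0 && decide (n < 2)) (Th false (fun k => S (k + 1)) n) := rfl

theorem Th_false_succ (S : ℕ → Bool) (n : ℕ) :
    Th false S (n + 1) = xor (S 0 && decide (n = 0)) (Th true (fun k => S (k + 1)) n) := rfl

theorem Th_congr {S T : ℕ → Bool} (h : ∀ k, S k = T k) (fl : Bool) (n : ℕ) :
    Th fl S n = Th fl T n := by
  have : S = T := funext h
  subst this; rfl

theorem Th_const_false : ∀ (n : ℕ) (fl : Bool), Th fl (fun _ => false) n = false := by
  intro n
  induction n with
  | zero => intro fl; cases fl <;> rfl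
  | succ n ih => intro fl; cases fl <;> simp [Th, ih]

theorem Th_linear : ∀ (n : ℕ) (fl : Bool) (S T : ℕ → Bool),
    Th fl (fun k => xor (S k) (T k)) n = xor (Th fl S n) (Th fl T n) := by
  intro n
  induction n with
  | zero => intro fl S T; cases fl <;> rfl
  | succ n ih =>
    intro fl S T
    cases fl
    · have hih : Th true (fun k => xor (S (k + 1)) (T (k + 1))) n
          = xor (Th true (fun k => S (k + 1)) n) (Th true (fun k => T (k + 1)) n) :=
        ih true _ _
      show Th false (fun k => xor (S k) (T k)) (n + 1) = _
      rw [Th_false_succ, Th_false_succ, Th_false_succ]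
      show xor (xor (S 0) (T 0) && decide (n = 0)) (Th true (fun k => xor (S (k+1)) (T (k+1))) n)
        = _
      rw [hih]
      generalize Th true (fun k => S (k + 1)) n = p
      generalize Th true (fun k => T (k + 1)) n = q
      generalize decide (n = 0) = d
      cases S 0 <;> cases T 0 <;> cases p <;> cases q <;> cases d <;> rfl
    · have hih : Th false (fun k => xor (S (k + 1)) (T (k + 1))) n
          = xor (Th false (fun k => S (k + 1)) n) (Th false (fun k => T (k + 1)) n) :=
        ih false _ _
      show Th true (fun k => xor (S k) (T k)) (n + 1) = _
      rw [Th_true_succ, Th_true_succ, Th_true_succ]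
      show xor (xor (S 0) (T 0) && decide (n < 2)) (Th false (fun k => xor (S (k+1)) (T (k+1))) n)
        = _
      rw [hih]
      generalize Th false (fun k => S (k + 1)) n = p
      generalize Th false (fun k => T (k + 1)) n = q
      generalize decide (n < 2) = d
      cases S 0 <;> cases T 0 <;> cases p <;> cases q <;> cases d <;> rfl

theorem Th_false_D : ∀ n, Th false Dset n = Eset n := by
  intro n
  cases n with
  | zero => rfl
  | succ n =>
    rw [Th_false_succ]
    have h1 : Th true (fun k => Dset (k + 1)) n = false := by
      rw [Th_congr (T := fun _ => false) (fun k => by simp [Dset]) true n, Th_const_false]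
    rw [h1]
    simp [Dset, Eset]

theorem Th_true_E : ∀ n, Th true Eset n = Dset n := by
  intro n
  cases n with
  | zero => rfl
  | succ n =>
    rw [Th_true_succ]
    have h1 : Th false (fun k => Eset (k + 1)) n = Eset n := by
      rw [Th_congr (T := Dset) (fun k => by simp [Dset, Eset]) false n, Th_false_D]
    rw [h1]
    simp [Eset, Dset]

theorem Th_inverse : ∀ (n : ℕ) (S : ℕ → Bool),
    Th true (Th false S) n = S n ∧ Th false (Th true S) n = S n := by
  intro n
  induction n with
  | zero => intro S; exact ⟨rfl, rfl⟩
  | succ n ih =>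
    intro S
    constructor
    · rw [Th_true_succ]
      have h0 : Th false S 0 = S 0 := Th_zero _ _
      have htail : ∀ k, Th false S (k + 1) =
          xor (if S 0 then Dset k else false) (Th true (fun j => S (j + 1)) k) := by
        intro k
        rw [Th_false_succ]
        cases hS : S 0 <;> simp [Dset]
      rw [Th_congr htail false n]
      rw [show (fun k => xor (if S 0 then Dset k else false) (Th true (fun j => S (j + 1)) k))
            = (fun k => xor ((fun j => if S 0 then Dset j else false) k)
                ((fun j => Th true (fun i => S (i + 1)) j) k)) from rfl]
      rw [Th_linear n false _ _]
      rw [(ih (fun j => S (j + 1))).2, h0]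
      cases hS : S 0
      · simp [Th_const_false]
      · simp only [if_true]
        rw [Th_false_D]
        simp [Eset]
    · rw [Th_false_succ]
      have h0 : Th true S 0 = S 0 := Th_zero _ _
      have htail : ∀ k, Th true S (k + 1) =
          xor (if S 0 then Eset k else false) (Th false (fun j => S (j + 1)) k) := by
        intro k
        rw [Th_true_succ]
        cases hS : S 0 <;> simp [Eset]
      rw [Th_congr htail true n]
      rw [show (fun k => xor (if S 0 then Eset k else false) (Th false (fun j => S (j + 1)) k))
            = (fun k => xor ((fun j => if S 0 then Eset j else false) k)
                ((fun j => Th false (fun i => S (i + 1)) j) k)) from rfl]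
      rw [Th_linear n true _ _]
      rw [(ih (fun j => S (j + 1))).1, h0]
      cases hS : S 0
      · simp [Th_const_false]
      · simp only [if_true]
        rw [Th_true_E]
        simp [Dset]

def Phif : (ℕ → Bool) → ℕ → Bool := Th true
def Psif : (ℕ → Bool) → ℕ → Bool := Th false

theorem Phif_Psif (S : ℕ → Bool) : Phif (Psif S) = S := funext fun n => (Th_inverse n S).1
theorem Psif_Phif (S : ℕ → Bool) : Psif (Phif S) = S := funext fun n => (Th_inverse n S).2

def Sv : ℤ → ℕ → Bool
  | Int.ofNat n => Phif^[n] Dset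
  | Int.negSucc n => Psif^[n + 1] Dset

theorem Sv_zero : Sv 0 = Dset := rfl

theorem Sv_succ (i : ℤ) : Phif (Sv i) = Sv (i + 1) := by
  cases i with
  | ofNat n =>
    show Phif (Phif^[n] Dset) = Sv (Int.ofNat n + 1)
    rw [show (Int.ofNat n + 1) = Int.ofNat (n + 1) from rfl]
    show Phif (Phif^[n] Dset) = Phif^[n + 1] Dset
    rw [Function.iterate_succ_apply']
  | negSucc n =>
    cases n with
    | zero =>
      show Phif (Psif^[1] Dset) = Sv (Int.negSucc 0 + 1)
      rw [show (Int.negSucc 0 + 1) = (0 : ℤ) from rfl]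
      show Phif (Psif Dset) = Dset
      exact Phif_Psif Dset
    | succ n =>
      show Phif (Psif^[n + 2] Dset) = Sv (Int.negSucc (n + 1) + 1)
      rw [show (Int.negSucc (n + 1) + 1) = Int.negSucc n from rfl]
      show Phif (Psif^[n + 2] Dset) = Psif^[n + 1] Dset
      rw [Function.iterate_succ_apply']
      exact Phif_Psif _

theorem Sv_pred (i : ℤ) : Psif (Sv i) = Sv (i - 1) := by
  have := Sv_succ (i - 1)
  rw [sub_add_cancel] at this
  rw [← this, Psif_Phif]

/-! ### Bounds -/

def BddS (S : ℕ → Bool) (m : ℕ) : Prop := S m = true ∧ ∀ k, m < k → S k = false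

theorem Q_lemma : ∀ (m : ℕ) (S : ℕ → Bool), BddS S m →
    BddS (Th (decide (m % 2 = 0)) S) (m + 2) := by
  intro m
  induction m with
  | zero =>
    intro S hS
    rw [show decide (0 % 2 = 0) = true from rfl]
    have hS' : ∀ k, S (k + 1) = false := fun k => hS.2 _ (by omega)
    have hrest : ∀ n, Th false (fun k => S (k + 1)) n = false := by
      intro n
      rw [Th_congr (T := fun _ => false) (fun k => hS' k) false n, Th_const_false]
    constructor
    · show Th true S (1 + 1) = true
      rw [Th_true_succ, hrest, hS.1]
      rfl
    · intro k hk
      obtain ⟨n, rfl⟩ : ∃ n, k = n + 1 := ⟨k - 1, by omega⟩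
      rw [Th_true_succ, hrest, hS.1, decide_eq_false (by omega : ¬ n < 2)]
      rfl
  | succ m ih =>
    intro S hS
    have hS' : BddS (fun k => S (k + 1)) m := ⟨hS.1, fun k hk => hS.2 _ (by omega)⟩
    have ihS := ih _ hS'
    rcases Nat.mod_two_eq_zero_or_one m with h | h
    · rw [show decide (m % 2 = 0) = true by rw [h]; rfl] at ihS
      rw [show decide ((m + 1) % 2 = 0) = false by
        rw [show (m + 1) % 2 = 1 by omega]; rfl]
      constructor
      · show Th false S ((m + 2) + 1) = true
        rw [Th_false_succ, ihS.1, decide_eq_false (by omega : ¬ m + 2 = 0)]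
        simp
      · intro k hk
        obtain ⟨n, rfl⟩ : ∃ n, k = n + 1 := ⟨k - 1, by omega⟩
        rw [Th_false_succ, ihS.2 n (by omega), decide_eq_false (by omega : ¬ n = 0)]
        simp
    · rw [show decide (m % 2 = 0) = false by rw [h]; rfl] at ihS
      rw [show decide ((m + 1) % 2 = 0) = true by
        rw [show (m + 1) % 2 = 0 by omega]; rfl]
      constructor
      · show Th true S ((m + 2) + 1) = true
        rw [Th_true_succ, ihS.1, decide_eq_false (by omega : ¬ m + 2 < 2)]
        simp
      · intro k hk
        obtain ⟨n, rfl⟩ : ∃ n, k = n + 1 := ⟨k - 1, by omega⟩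
        rw [Th_true_succ, ihS.2 n (by omega), decide_eq_false (by omega : ¬ n < 2)]
        simp

def Mx : ℤ → ℕ
  | Int.ofNat n => 2 * n
  | Int.negSucc n => 2 * n + 1

theorem Sv_bdd : ∀ i : ℤ, BddS (Sv i) (Mx i) := by
  intro i
  cases i with
  | ofNat n =>
    induction n with
    | zero =>
      refine ⟨rfl, fun k hk => ?_⟩
      show Dset k = false
      exact decide_eq_false (by omega)
    | succ n ih =>
      have h1 : Sv (Int.ofNat (n + 1)) = Phif (Sv (Int.ofNat n)) := by
        show Phif^[n + 1] Dset = _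
        rw [Function.iterate_succ_apply']
        rfl
      rw [h1]
      have hq := Q_lemma (2 * n) (Sv (Int.ofNat n)) ih
      rw [show decide ((2 * n) % 2 = 0) = true by
        rw [show (2 * n) % 2 = 0 by omega]; rfl] at hq
      show BddS (Th true (Sv (Int.ofNat n))) (Mx (Int.ofNat (n + 1)))
      rw [show Mx (Int.ofNat (n + 1)) = 2 * n + 2 by show 2 * (n + 1) = 2 * n + 2; omega]
      exact hq
  | negSucc n =>
    induction n with
    | zero =>
      show BddS (Psif^[1] Dset) 1
      have h1 : Psif^[1] Dset = Eset := funext Th_false_D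
      rw [h1]
      refine ⟨rfl, fun k hk => ?_⟩
      show Eset k = false
      exact decide_eq_false (by omega)
    | succ n ih =>
      have h1 : Sv (Int.negSucc (n + 1)) = Psif (Sv (Int.negSucc n)) := by
        show Psif^[n + 2] Dset = _
        rw [Function.iterate_succ_apply']
        rfl
      rw [h1]
      have hq := Q_lemma (2 * n + 1) (Sv (Int.negSucc n)) ih
      rw [show decide ((2 * n + 1) % 2 = 0) = false by
        rw [show (2 * n + 1) % 2 = 1 by omega]; rfl] at hq
      show BddS (Th false (Sv (Int.negSucc n))) (Mx (Int.negSucc (n + 1)))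
      rw [show Mx (Int.negSucc (n + 1)) = (2 * n + 1) + 2 by
        show 2 * (n + 1) + 1 = (2 * n + 1) + 2; omega]
      exact hq

theorem Mx_injective : Function.Injective Mx := by
  intro i j h
  cases i <;> cases j <;> simp only [Mx] at h
  · congr 1; omega
  · exact absurd h (by omega)
  · exact absurd h (by omega)
  · congr 1; omega

theorem BddS_unique {S : ℕ → Bool} {m m' : ℕ} (h1 : BddS S m) (h2 : BddS S m') : m = m' := by
  rcases lt_trichotomy m m' with h | h | h
  · have := h1.2 m' h
    rw [h2.1] at this; exact absurd this (by simp)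
  · exact h
  · have := h2.2 m h
    rw [h1.1] at this; exact absurd this (by simp)

theorem Sv_injective : Function.Injective Sv := by
  intro i j h
  exact Mx_injective (BddS_unique (Sv_bdd i) (h ▸ Sv_bdd j))



/-! ### The automaton -/

def runs : List Bool → List Bool × List Bool × List Bool
  | [] => ([], [], [])
  | x :: w => ((!x) :: (runs w).2.2, x :: (runs w).2.2,
      x :: (if x then (runs w).1 else (runs w).2.1))

def ra (w : List Bool) : List Bool := (runs w).1
def rb (w : List Bool) : List Bool := (runs w).2.1
def rc (w : List Bool) : List Bool := (runs w).2.2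

@[simp] theorem ra_nil : ra [] = [] := rfl
@[simp] theorem rb_nil : rb [] = [] := rfl
@[simp] theorem rc_nil : rc [] = [] := rfl

@[simp] theorem ra_cons (x : Bool) (w : List Bool) : ra (x :: w) = (!x) :: rc w := rfl
@[simp] theorem rb_cons (x : Bool) (w : List Bool) : rb (x :: w) = x :: rc w := rfl
@[simp] theorem rc_cons (x : Bool) (w : List Bool) :
    rc (x :: w) = x :: (if x then ra w else rb w) := rfl

theorem runs_invol : ∀ w : List Bool, ra (ra w) = w ∧ rb (rb w) = w ∧ rc (rc w) = w := by
  intro w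
  induction w with
  | nil => exact ⟨rfl, rfl, rfl⟩
  | cons x w ih =>
    refine ⟨?_, ?_, ?_⟩
    · simp [ih.2.2]
    · simp [ih.2.2]
    · cases x <;> simp [ih.1, ih.2.1]

def uf (w : List Bool) : List Bool := ra (rc w)
def Uf (w : List Bool) : List Bool := rc (ra w)
def vf (w : List Bool) : List Bool := rc (rb w)
def Vf (w : List Bool) : List Bool := rb (rc w)

@[simp] theorem uf_nil : uf [] = [] := rfl
@[simp] theorem Uf_nil : Uf [] = [] := rfl
@[simp] theorem vf_nil : vf [] = [] := rfl
@[simp] theorem Vf_nil : Vf [] = [] := rfl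

theorem uf_cons_f (w : List Bool) : uf (false :: w) = true :: vf w := rfl
theorem uf_cons_t (w : List Bool) : uf (true :: w) = false :: Uf w := rfl
theorem Uf_cons_f (w : List Bool) : Uf (false :: w) = true :: uf w := rfl
theorem Uf_cons_t (w : List Bool) : Uf (true :: w) = false :: Vf w := rfl
theorem vf_cons_f (w : List Bool) : vf (false :: w) = false :: Vf w := rfl
theorem vf_cons_t (w : List Bool) : vf (true :: w) = true :: uf w := rfl
theorem Vf_cons_f (w : List Bool) : Vf (false :: w) = false :: vf w := rfl
theorem Vf_cons_t (w : List Bool) : Vf (true :: w) = true :: Uf w := rfl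

/-- The central mutual-recursion lemma: how `u = ac`, `u⁻¹ = ca`, `v = cb`, `v⁻¹ = bc`
conjugate coordinatewise flips. -/
theorem key8 : ∀ (w : List Bool) (S : ℕ → Bool),
    uf (flipb S (Uf w)) = flipb (Th true S) w ∧
    Uf (flipb S (uf w)) = flipb (Th false S) w ∧
    vf (flipb S (Vf w)) = flipb (Th false S) w ∧
    Vf (flipb S (vf w)) = flipb (Th true S) w ∧
    vf (flipb S (uf w)) = flipb (fun n => xor (Eset n) (Th false S n)) w ∧
    uf (flipb S (vf w)) = flipb (fun n => xor (Dset n) (Th true S n)) w ∧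
    Uf (flipb S (Vf w)) = flipb (fun n => xor (Eset n) (Th false S n)) w ∧
    Vf (flipb S (Uf w)) = flipb (fun n => xor (Dset n) (Th true S n)) w := by
  intro w
  induction w with
  | nil => intro S; refine ⟨rfl, rfl, rfl, rfl, rfl, rfl, rfl, rfl⟩
  | cons x w ih =>
    intro S
    have ih1 := fun T => (ih T).1
    have ih2 := fun T => (ih T).2.1
    have ih3 := fun T => (ih T).2.2.1
    have ih4 := fun T => (ih T).2.2.2.1
    have ih5 := fun T => (ih T).2.2.2.2.1
    have ih6 := fun T => (ih T).2.2.2.2.2.1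
    have ih7 := fun T => (ih T).2.2.2.2.2.2.1
    have ih8 := fun T => (ih T).2.2.2.2.2.2.2
    have hE : ∀ k : ℕ, Eset (k + 1) = Dset k := by
      intro k
      simp only [Eset, Dset]
      exact decide_eq_decide.mpr (by omega)
    have hD : ∀ k : ℕ, Dset (k + 1) = false := by
      intro k
      exact decide_eq_false (by omega)
    refine ⟨?_, ?_, ?_, ?_, ?_, ?_, ?_, ?_⟩ <;>
      cases x <;> cases hS : S 0 <;>
      simp only [uf_cons_f, uf_cons_t, Uf_cons_f, Uf_cons_t, vf_cons_f, vf_cons_t,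
        Vf_cons_f, Vf_cons_t, flipb_cons, hS, Bool.xor_false, Bool.xor_true,
        Bool.not_true, Bool.not_false, Th_zero, Th_true_succ, Th_false_succ,
        Bool.false_and, Bool.true_and, Eset, Dset, decide_true, decide_false,
        Nat.add_eq_zero, Nat.succ_ne_zero, and_false,
        ih1, ih2, ih3, ih4, ih5, ih6, ih7, ih8] <;>
      first
      | rfl
      | (refine congrArg₂ _ rfl (flipb_congr (fun k => ?_) w)
         rcases Nat.lt_or_ge k 2 with hk | hk
         · interval_cases k <;>
             simp [Th_true_succ, Th_false_succ, hS, Eset, Dset]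
         · simp [Th_true_succ, Th_false_succ, hS, Eset, Dset,
             decide_eq_false (show ¬ k < 2 by omega),
             decide_eq_false (show ¬ k + 1 < 2 by omega),
             decide_eq_false (show ¬ k = 0 by omega),
             decide_eq_false (show ¬ k + 1 = 0 by omega)])


/-! ### Permutation level -/

def raE : Equiv.Perm (List Bool) :=
  ⟨ra, ra, fun w => (runs_invol w).1, fun w => (runs_invol w).1⟩
def rbE : Equiv.Perm (List Bool) :=
  ⟨rb, rb, fun w => (runs_invol w).2.1, fun w => (runs_invol w).2.1⟩
def rcE : Equiv.Perm (List Bool) :=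
  ⟨rc, rc, fun w => (runs_invol w).2.2, fun w => (runs_invol w).2.2⟩

@[simp] theorem raE_apply (w : List Bool) : raE w = ra w := rfl
@[simp] theorem rbE_apply (w : List Bool) : rbE w = rb w := rfl
@[simp] theorem rcE_apply (w : List Bool) : rcE w = rc w := rfl

theorem raE_sq : raE * raE = 1 := Equiv.ext fun w => (runs_invol w).1
theorem rbE_sq : rbE * rbE = 1 := Equiv.ext fun w => (runs_invol w).2.1
theorem rcE_sq : rcE * rcE = 1 := Equiv.ext fun w => (runs_invol w).2.2

theorem raE_inv : raE⁻¹ = raE := inv_eq_of_mul_eq_one_right raE_sq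
theorem rbE_inv : rbE⁻¹ = rbE := inv_eq_of_mul_eq_one_right rbE_sq
theorem rcE_inv : rcE⁻¹ = rcE := inv_eq_of_mul_eq_one_right rcE_sq

theorem uE_inv : (raE * rcE)⁻¹ = rcE * raE := by
  rw [mul_inv_rev, raE_inv, rcE_inv]

theorem uE_apply (w : List Bool) : (raE * rcE) w = uf w := rfl
theorem uEinv_apply (w : List Bool) : (raE * rcE)⁻¹ w = Uf w := by
  rw [uE_inv]; rfl

theorem K1 (S : ℕ → Bool) :
    (raE * rcE) * flipPerm S * (raE * rcE)⁻¹ = flipPerm (Phif S) := by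
  refine Equiv.ext fun w => ?_
  have h1 : ((raE * rcE) * flipPerm S * (raE * rcE)⁻¹) w
      = (raE * rcE) (flipPerm S ((raE * rcE)⁻¹ w)) := rfl
  rw [h1, uEinv_apply, flipPerm_apply, uE_apply]
  exact (key8 w S).1

theorem K2 (S : ℕ → Bool) :
    (raE * rcE)⁻¹ * flipPerm S * (raE * rcE) = flipPerm (Psif S) := by
  refine Equiv.ext fun w => ?_
  have h1 : ((raE * rcE)⁻¹ * flipPerm S * (raE * rcE)) w
      = (raE * rcE)⁻¹ (flipPerm S ((raE * rcE) w)) := rfl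
  rw [h1, uE_apply, flipPerm_apply, uEinv_apply]
  exact (key8 w S).2.1

theorem epsE : raE * rbE = flipPerm Dset := by
  refine Equiv.ext fun w => ?_
  show ra (rb w) = flipb Dset w
  cases w with
  | nil => rfl
  | cons x w =>
    simp only [rb_cons, ra_cons, flipb_cons]
    rw [(runs_invol w).2.2]
    refine congrArg₂ _ (by cases x <;> rfl) ?_
    rw [flipb_congr (S := fun k => Dset (k + 1)) (T := fun _ => false)
      (fun k => decide_eq_false (by omega : ¬ (k + 1 = 0))) w, flipb_zero]

noncomputable def epsZ (i : ℤ) : Equiv.Perm (List Bool) := flipPerm (Sv i)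

theorem epsZ_zero : epsZ 0 = raE * rbE := by rw [epsE]; rfl

theorem epsZ_inv (i : ℤ) : (epsZ i)⁻¹ = epsZ i := flipPerm_inv _

theorem conj_eps_one (i : ℤ) :
    (raE * rcE) * epsZ i * (raE * rcE)⁻¹ = epsZ (i + 1) := by
  show (raE * rcE) * flipPerm (Sv i) * (raE * rcE)⁻¹ = _
  rw [K1, Sv_succ]
  rfl

theorem conj_eps_one' (i : ℤ) :
    (raE * rcE)⁻¹ * epsZ i * (raE * rcE) = epsZ (i - 1) := by
  show (raE * rcE)⁻¹ * flipPerm (Sv i) * (raE * rcE) = _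
  rw [K2, Sv_pred]
  rfl

theorem conj_eps : ∀ (m : ℤ) (i : ℤ),
    (raE * rcE) ^ m * epsZ i * ((raE * rcE) ^ m)⁻¹ = epsZ (i + m) := by
  intro m
  induction m using Int.induction_on with
  | zero => intro i; simp
  | succ m ih =>
    intro i
    have h1 : (raE * rcE) ^ (m + 1 : ℤ) = (raE * rcE) ^ (m : ℤ) * (raE * rcE) := by
      rw [zpow_add_one]
    rw [h1]
    have h2 : (raE * rcE) ^ (m : ℤ) * (raE * rcE) * epsZ i *
        ((raE * rcE) ^ (m : ℤ) * (raE * rcE))⁻¹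
        = (raE * rcE) ^ (m : ℤ) * ((raE * rcE) * epsZ i * (raE * rcE)⁻¹) *
          ((raE * rcE) ^ (m : ℤ))⁻¹ := by
      simp only [mul_inv_rev, inv_inv, mul_assoc]
    rw [h2, conj_eps_one, ih]
    congr 1
    ring
  | pred m ih =>
    intro i
    have h1 : (raE * rcE) ^ (-m - 1 : ℤ) = (raE * rcE) ^ (-m : ℤ) * (raE * rcE)⁻¹ := by
      rw [zpow_sub_one]
    rw [h1]
    have h2 : (raE * rcE) ^ (-m : ℤ) * (raE * rcE)⁻¹ * epsZ i *
        ((raE * rcE) ^ (-m : ℤ) * (raE * rcE)⁻¹)⁻¹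
        = (raE * rcE) ^ (-m : ℤ) * ((raE * rcE)⁻¹ * epsZ i * (raE * rcE)) *
          ((raE * rcE) ^ (-m : ℤ))⁻¹ := by
      simp only [mul_inv_rev, inv_inv, mul_assoc]
    rw [h2, conj_eps_one', ih]
    congr 1
    ring

theorem epsZ_injective : Function.Injective epsZ := fun i j h =>
  Sv_injective (flipPerm_injective h)

/-! ### The lamp-configuration homomorphism data -/

def indZ (S : ℕ → Bool) : ℕ → ZMod 2 := fun k => if S k then 1 else 0

noncomputable def Af (f : ℤ →₀ ZMod 2) : ℕ → ZMod 2 := f.sum fun i x => x • indZ (Sv i)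

theorem Af_zero : Af 0 = 0 := Finsupp.sum_zero_index

theorem Af_add (f g : ℤ →₀ ZMod 2) : Af (f + g) = Af f + Af g :=
  Finsupp.sum_add_index' (fun i => zero_smul _ _) (fun i b₁ b₂ => add_smul b₁ b₂ _)

theorem Af_single (i : ℤ) (x : ZMod 2) : Af (Finsupp.single i x) = x • indZ (Sv i) :=
  Finsupp.sum_single_index (zero_smul _ _)

noncomputable def flipZ (X : ℕ → ZMod 2) : Equiv.Perm (List Bool) :=
  flipPerm fun k => decide (X k = 1)

theorem zmod2_cases (x : ZMod 2) : x = 0 ∨ x = 1 := by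
  fin_cases x
  · exact Or.inl rfl
  · exact Or.inr rfl

theorem flipZ_add (X Y : ℕ → ZMod 2) : flipZ (X + Y) = flipZ X * flipZ Y := by
  rw [flipZ, flipZ, flipZ, flipPerm_mul]
  refine congrArg _ (funext fun k => ?_)
  show decide (X k + Y k = 1) = xor (decide (X k = 1)) (decide (Y k = 1))
  rcases zmod2_cases (X k) with h | h <;> rcases zmod2_cases (Y k) with h' | h' <;>
    rw [h, h'] <;> decide

theorem flipZ_zero : flipZ 0 = 1 := by
  rw [flipZ]
  rw [show (fun k => decide ((0 : ℕ → ZMod 2) k = 1)) = fun _ => false from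
    funext fun k => by rw [Pi.zero_apply]; exact decide_eq_false (by decide)]
  exact flipPerm_zero

theorem flipZ_inv (X : ℕ → ZMod 2) : (flipZ X)⁻¹ = flipZ X := flipPerm_inv _

theorem flipZ_eq_one {X : ℕ → ZMod 2} (h : flipZ X = 1) : X = 0 := by
  rw [flipZ, ← flipPerm_zero] at h
  have h2 := flipPerm_injective h
  refine funext fun k => ?_
  have h3 := congrFun h2 k
  simp only [decide_eq_false_iff_not] at h3
  rcases zmod2_cases (X k) with h4 | h4
  · exact h4
  · exact absurd h4 h3

theorem flipZ_ind (S : ℕ → Bool) : flipZ (indZ S) = flipPerm S := by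
  rw [flipZ]
  refine congrArg _ (funext fun k => ?_)
  show decide (indZ S k = 1) = S k
  cases h : S k <;> simp [indZ, h]

theorem flipZ_comm (X Y : ℕ → ZMod 2) : flipZ X * flipZ Y = flipZ Y * flipZ X :=
  flipPerm_comm _ _


/-! ### Conjugation of lamp configurations by powers of u -/

theorem conj_mul {G : Type*} [Group G] (g p q : G) :
    g * (p * q) * g⁻¹ = (g * p * g⁻¹) * (g * q * g⁻¹) := by
  simp only [mul_assoc, inv_mul_cancel_left]

theorem shift_single (m i : ℤ) (x : ZMod 2) :
    shiftF m (Finsupp.single i x) = Finsupp.single (i + m) x := by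
  show Finsupp.equivMapDomain (shiftE m) (Finsupp.single i x) = _
  rw [Finsupp.equivMapDomain_single]
  rfl

theorem conj_flip_single (m i : ℤ) (x : ZMod 2) :
    (raE * rcE) ^ m * flipZ (Af (Finsupp.single i x)) * ((raE * rcE) ^ m)⁻¹
      = flipZ (Af (Finsupp.single (i + m) x)) := by
  rcases zmod2_cases x with h | h <;> subst h
  · rw [Finsupp.single_zero, Finsupp.single_zero, Af_zero, flipZ_zero]
    simp
  · rw [Af_single, one_smul, flipZ_ind, Af_single, one_smul, flipZ_ind]
    exact conj_eps m i

theorem conj_flip (m : ℤ) (g : ℤ →₀ ZMod 2) :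
    (raE * rcE) ^ m * flipZ (Af g) * ((raE * rcE) ^ m)⁻¹ = flipZ (Af (shiftF m g)) := by
  induction g using Finsupp.induction with
  | zero =>
    rw [shiftF_zero_fun, Af_zero, flipZ_zero]
    simp
  | single_add i x f hi hx ih =>
    rw [shiftF_add, shift_single, Af_add, Af_add, flipZ_add, flipZ_add, conj_mul, ih,
      conj_flip_single]

/-! ### The homomorphism ψ : Lamplighter →* Perm -/

noncomputable def psiH : Lamplighter →* Equiv.Perm (List Bool) where
  toFun x := flipZ (Af x.lamps) * (raE * rcE) ^ x.pos
  map_one' := by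
    show flipZ (Af (1 : Lamplighter).lamps) * (raE * rcE) ^ (1 : Lamplighter).pos = 1
    rw [Lamplighter.one_lamps, Lamplighter.one_pos, Af_zero, flipZ_zero, zpow_zero, one_mul]
  map_mul' x y := by
    show flipZ (Af (x * y).lamps) * (raE * rcE) ^ (x * y).pos = _
    rw [Lamplighter.mul_lamps, Lamplighter.mul_pos, Af_add, flipZ_add,
      ← conj_flip x.pos y.lamps, zpow_add]
    simp only [mul_assoc, inv_mul_cancel_left]

theorem psiH_apply (x : Lamplighter) :
    psiH x = flipZ (Af x.lamps) * (raE * rcE) ^ x.pos := rfl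

theorem flipPerm_conj (S T : ℕ → Bool) :
    flipPerm S * flipPerm T * (flipPerm S)⁻¹ = flipPerm T := by
  rw [flipPerm_inv, flipPerm_mul, flipPerm_mul]
  refine congrArg _ (funext fun n => ?_)
  cases S n <;> cases T n <;> rfl

theorem Af_indep {f : ℤ →₀ ZMod 2} (h : Af f = 0) : f = 0 := by
  by_contra hf
  have hne : f.support.Nonempty := Finsupp.support_nonempty_iff.mpr hf
  obtain ⟨i0, hi0, hmax⟩ := f.support.exists_max_image Mx hne
  have hval : Af f (Mx i0) = f i0 := by
    show (f.sum fun i x => x • indZ (Sv i)) (Mx i0) = f i0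
    rw [Finsupp.sum, Finset.sum_apply, Finset.sum_eq_single i0]
    · rw [Pi.smul_apply, smul_eq_mul, indZ, (Sv_bdd i0).1, if_pos rfl, mul_one]
    · intro b hb hbne
      have h1 : Mx b ≠ Mx i0 := fun e => hbne (Mx_injective e)
      have h2 : Mx b < Mx i0 := lt_of_le_of_ne (hmax b hb) h1
      have h3 : Sv b (Mx i0) = false := (Sv_bdd b).2 _ h2
      rw [Pi.smul_apply, smul_eq_mul, indZ, h3]
      simp
    · intro hni0
      exact absurd hi0 hni0
  rw [h, Pi.zero_apply] at hval
  exact (Finsupp.mem_support_iff.mp hi0) hval.symm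

theorem psiH_injective : Function.Injective psiH := by
  rw [injective_iff_map_eq_one]
  intro x hx
  obtain ⟨f, m⟩ := x
  have hx' : flipZ (Af f) * (raE * rcE) ^ m = 1 := hx
  have h1 : (raE * rcE) ^ m = flipZ (Af f) := by
    have h2 := eq_inv_of_mul_eq_one_left hx'
    rw [← flipZ_inv (Af f), h2, inv_inv]
  have hm : m = 0 := by
    have h2 := conj_eps m 0
    rw [zero_add, h1] at h2
    rw [show flipZ (Af f) = flipPerm (fun k => decide (Af f k = 1)) from rfl] at h2
    rw [show epsZ 0 = flipPerm (Sv 0) from rfl, flipPerm_conj] at h2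
    exact epsZ_injective h2.symm
  subst hm
  rw [zpow_zero, mul_one] at hx'
  have hf : f = 0 := Af_indep (flipZ_eq_one hx')
  subst hf
  rfl

/-! ### Range of ψ -/

theorem u_mem_uv : raE * rcE ∈ Subgroup.closure {raE * rcE, rcE * rbE} :=
  Subgroup.subset_closure (Set.mem_insert _ _)

theorem v_mem_uv : rcE * rbE ∈ Subgroup.closure {raE * rcE, rcE * rbE} :=
  Subgroup.subset_closure (Set.mem_insert_of_mem _ rfl)

theorem eps0_mem : raE * rbE ∈ Subgroup.closure {raE * rcE, rcE * rbE} := by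
  have h : raE * rbE = (raE * rcE) * (rcE * rbE) := by
    rw [show (raE * rcE) * (rcE * rbE) = raE * (rcE * rcE) * rbE by
      simp only [mul_assoc], rcE_sq, mul_one]
  rw [h]
  exact mul_mem u_mem_uv v_mem_uv

theorem epsZ_mem (i : ℤ) : epsZ i ∈ Subgroup.closure {raE * rcE, rcE * rbE} := by
  have h := conj_eps i 0
  rw [zero_add] at h
  rw [← h, epsZ_zero]
  exact mul_mem (mul_mem (zpow_mem u_mem_uv i) eps0_mem) (inv_mem (zpow_mem u_mem_uv i))

theorem flip_mem (f : ℤ →₀ ZMod 2) :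
    flipZ (Af f) ∈ Subgroup.closure {raE * rcE, rcE * rbE} := by
  induction f using Finsupp.induction with
  | zero =>
    rw [Af_zero, flipZ_zero]
    exact one_mem _
  | single_add i x f hi hx ih =>
    rw [Af_add, flipZ_add]
    refine mul_mem ?_ ih
    rcases zmod2_cases x with h | h <;> subst h
    · rw [Finsupp.single_zero, Af_zero, flipZ_zero]
      exact one_mem _
    · rw [Af_single, one_smul, flipZ_ind]
      exact epsZ_mem i

theorem psiH_range : psiH.range = Subgroup.closure {raE * rcE, rcE * rbE} := by
  apply le_antisymm
  · rintro g ⟨x, rfl⟩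
    exact mul_mem (flip_mem x.lamps) (zpow_mem u_mem_uv x.pos)
  · rw [Subgroup.closure_le]
    rintro g hg
    rcases hg with h | h
    · refine ⟨⟨0, 1⟩, ?_⟩
      rw [psiH_apply]
      show flipZ (Af 0) * (raE * rcE) ^ (1 : ℤ) = g
      rw [Af_zero, flipZ_zero, one_mul, zpow_one, h]
    · refine ⟨⟨Finsupp.single (-1) 1, -1⟩, ?_⟩
      rw [psiH_apply]
      show flipZ (Af (Finsupp.single (-1) 1)) * (raE * rcE) ^ (-1 : ℤ) = g
      rw [Af_single, one_smul, flipZ_ind]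
      have h2 := conj_eps (-1) 0
      rw [zero_add] at h2
      rw [show epsZ (-1 : ℤ) = flipPerm (Sv (-1 : ℤ)) from rfl] at h2
      rw [← h2, zpow_neg_one, inv_inv, mul_inv_cancel_right, epsZ_zero, uE_inv,
        mul_assoc, ← mul_assoc raE raE rbE, raE_sq, one_mul, h]

noncomputable def isoH : (Subgroup.closure {raE * rcE, rcE * rbE}) ≃* Lamplighter :=
  (MulEquiv.subgroupCongr psiH_range.symm).trans (MonoidHom.ofInjective psiH_injective).symm


/-! ### The flip automorphism of the lamplighter group -/

def reflE : ℤ ≃ ℤ where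
  toFun i := -1 - i
  invFun i := -1 - i
  left_inv i := by show -1 - (-1 - i) = i; omega
  right_inv i := by show -1 - (-1 - i) = i; omega

def reflF (f : ℤ →₀ ZMod 2) : ℤ →₀ ZMod 2 := Finsupp.equivMapDomain reflE f

theorem reflF_apply (f : ℤ →₀ ZMod 2) (i : ℤ) : reflF f i = f (-1 - i) := rfl

theorem reflF_add (f g : ℤ →₀ ZMod 2) : reflF (f + g) = reflF f + reflF g := by
  ext i
  simp [reflF_apply]

theorem reflF_reflF (f : ℤ →₀ ZMod 2) : reflF (reflF f) = f := by
  ext i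
  rw [reflF_apply, reflF_apply]
  congr 1
  omega

theorem reflF_shiftF (m : ℤ) (f : ℤ →₀ ZMod 2) :
    reflF (shiftF m f) = shiftF (-m) (reflF f) := by
  ext i
  rw [reflF_apply, shiftF_apply, shiftF_apply, reflF_apply]
  congr 1
  omega

theorem reflF_single (i : ℤ) (x : ZMod 2) :
    reflF (Finsupp.single i x) = Finsupp.single (-1 - i) x := by
  rw [reflF, Finsupp.equivMapDomain_single]
  rfl

noncomputable def tauA : MulAut Lamplighter where
  toFun x := ⟨reflF x.lamps, -x.pos⟩
  invFun x := ⟨reflF x.lamps, -x.pos⟩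
  left_inv x := Lamplighter.ext (reflF_reflF _) (neg_neg _)
  right_inv x := Lamplighter.ext (reflF_reflF _) (neg_neg _)
  map_mul' x y := by
    refine Lamplighter.ext ?_ ?_
    · show reflF (x.lamps + shiftF x.pos y.lamps)
        = reflF x.lamps + shiftF (-x.pos) (reflF y.lamps)
      rw [reflF_add, reflF_shiftF]
    · show -(x.pos + y.pos) = -x.pos + -y.pos
      ring

theorem tauA_apply (x : Lamplighter) : tauA x = ⟨reflF x.lamps, -x.pos⟩ := rfl

theorem tauA_sq : tauA * tauA = 1 := by
  refine DFunLike.ext _ _ fun x => ?_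
  show tauA (tauA x) = x
  exact Lamplighter.ext (reflF_reflF _) (neg_neg _)

noncomputable def phiH : Multiplicative (ZMod 2) →* MulAut Lamplighter where
  toFun x := if Multiplicative.toAdd x = 0 then 1 else tauA
  map_one' := by simp
  map_mul' x y := by
    rcases zmod2_cases (Multiplicative.toAdd x) with hx | hx <;>
      rcases zmod2_cases (Multiplicative.toAdd y) with hy | hy <;>
      simp only [toAdd_mul, hx, hy]
    · simp
    · simp
    · simp
    · exact tauA_sq.symm

/-! ### Conjugation by c -/

theorem ab_comm : rbE * raE = raE * rbE := by
  have h1 : rbE * raE = (raE * rbE)⁻¹ := by rw [mul_inv_rev, raE_inv, rbE_inv]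
  rw [h1, epsE, flipPerm_inv, ← epsE]

theorem c_conj_u : rcE * (raE * rcE) * rcE⁻¹ = (raE * rcE)⁻¹ := by
  rw [rcE_inv, uE_inv]
  rw [show rcE * (raE * rcE) * rcE = rcE * raE * (rcE * rcE) by simp only [mul_assoc],
    rcE_sq, mul_one]

theorem c_conj_upow (m : ℤ) : rcE * (raE * rcE) ^ m * rcE⁻¹ = (raE * rcE) ^ (-m) := by
  have h1 : (MulAut.conj rcE) ((raE * rcE) ^ m) = ((MulAut.conj rcE) (raE * rcE)) ^ m :=
    map_zpow _ _ _
  rw [MulAut.conj_apply, MulAut.conj_apply] at h1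
  rw [h1, c_conj_u, inv_zpow, zpow_neg]

theorem c_conj_eps0 : rcE * epsZ 0 * rcE⁻¹ = epsZ (-1) := by
  have h2 := conj_eps (-1) 0
  rw [zero_add] at h2
  rw [← h2, zpow_neg_one, inv_inv, epsZ_zero, uE_inv, rcE_inv]
  rw [show rcE * raE * (raE * rbE) * (raE * rcE) = rcE * (raE * raE) * rbE * raE * rcE by
    simp only [mul_assoc], raE_sq, mul_one]
  rw [show rcE * (raE * rbE) * rcE = rcE * raE * rbE * rcE by simp only [mul_assoc]]
  rw [show rcE * rbE * raE * rcE = rcE * (rbE * raE) * rcE by simp only [mul_assoc], ab_comm]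
  simp only [mul_assoc]

theorem c_conj_eps (i : ℤ) : rcE * epsZ i * rcE⁻¹ = epsZ (-1 - i) := by
  have e1 : epsZ i = (raE * rcE) ^ i * epsZ 0 * ((raE * rcE) ^ i)⁻¹ := by
    rw [conj_eps i 0, zero_add]
  rw [e1]
  have e2 : rcE * ((raE * rcE) ^ i * epsZ 0 * ((raE * rcE) ^ i)⁻¹) * rcE⁻¹
      = (rcE * (raE * rcE) ^ i * rcE⁻¹) * (rcE * epsZ 0 * rcE⁻¹) *
        (rcE * ((raE * rcE) ^ i)⁻¹ * rcE⁻¹) := by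
    simp only [mul_assoc, inv_mul_cancel_left]
  rw [e2, c_conj_upow, c_conj_eps0]
  have e3 : rcE * ((raE * rcE) ^ i)⁻¹ * rcE⁻¹ = (rcE * (raE * rcE) ^ i * rcE⁻¹)⁻¹ := by
    simp only [mul_inv_rev, inv_inv, mul_assoc]
  rw [e3, c_conj_upow]
  have e4 := conj_eps (-i) (-1)
  rw [e4]
  congr 1

theorem c_conj_flip (f : ℤ →₀ ZMod 2) :
    rcE * flipZ (Af f) * rcE⁻¹ = flipZ (Af (reflF f)) := by
  induction f using Finsupp.induction with
  | zero =>
    have : reflF 0 = 0 := by ext i; rw [reflF_apply]; rfl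
    rw [this, Af_zero, flipZ_zero]
    simp
  | single_add i x f hi hx ih =>
    rw [reflF_add, Af_add, Af_add, flipZ_add, flipZ_add, conj_mul, ih, reflF_single]
    rcases zmod2_cases x with h | h <;> subst h
    · rw [Finsupp.single_zero, Finsupp.single_zero, Af_zero, flipZ_zero]
      simp
    · rw [Af_single, one_smul, flipZ_ind, Af_single, one_smul, flipZ_ind]
      exact congrArg₂ _ (c_conj_eps i) rfl

theorem c_psi (x : Lamplighter) : rcE * psiH x = psiH (tauA x) * rcE := by
  obtain ⟨f, m⟩ := x
  rw [psiH_apply, tauA_apply, psiH_apply]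
  show rcE * (flipZ (Af f) * (raE * rcE) ^ m) = flipZ (Af (reflF f)) * (raE * rcE) ^ (-m) * rcE
  have h1 : rcE * (flipZ (Af f) * (raE * rcE) ^ m)
      = (rcE * flipZ (Af f) * rcE⁻¹) * (rcE * (raE * rcE) ^ m * rcE⁻¹) * rcE := by
    simp only [mul_assoc, inv_mul_cancel_left, inv_mul_cancel, mul_one]
  rw [h1, c_conj_flip, c_conj_upow]

theorem cpow2 (s t : ZMod 2) : rcE ^ (s + t).val = rcE ^ s.val * rcE ^ t.val := by
  rcases zmod2_cases s with h | h <;> rcases zmod2_cases t with h' | h' <;> subst h h'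
  · rfl
  · rw [zero_add, ZMod.val_zero, pow_zero, one_mul]
  · rw [add_zero, ZMod.val_zero, pow_zero, mul_one]
  · rw [show (1 : ZMod 2) + 1 = 0 by decide, ZMod.val_zero, pow_zero,
      show ((1 : ZMod 2)).val = 1 by rfl, pow_one, rcE_sq]

theorem cpow_psi (k : Multiplicative (ZMod 2)) (x : Lamplighter) :
    rcE ^ (Multiplicative.toAdd k).val * psiH x = psiH (phiH k x) * rcE ^ (Multiplicative.toAdd k).val := by
  rcases zmod2_cases (Multiplicative.toAdd k) with h | h <;> rw [h]
  · rw [ZMod.val_zero, pow_zero, one_mul, mul_one]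
    show psiH x = psiH ((if Multiplicative.toAdd k = 0 then (1 : MulAut Lamplighter) else tauA) x)
    rw [if_pos h]
    rfl
  · rw [show ((1 : ZMod 2)).val = 1 by rfl, pow_one]
    show rcE * psiH x = psiH ((if Multiplicative.toAdd k = 0 then (1 : MulAut Lamplighter) else tauA) x) * rcE
    rw [if_neg (by rw [h]; decide)]
    exact c_psi x

/-! ### The homomorphism χ : Lamplighter ⋊ C₂ →* Perm -/

noncomputable def chiH : SemidirectProduct Lamplighter (Multiplicative (ZMod 2)) phiH →*
    Equiv.Perm (List Bool) where
  toFun g := psiH g.left * rcE ^ (Multiplicative.toAdd g.right).val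
  map_one' := by
    show psiH (1 : SemidirectProduct _ _ phiH).left *
      rcE ^ (Multiplicative.toAdd (1 : SemidirectProduct _ _ phiH).right).val = 1
    rw [SemidirectProduct.one_left, SemidirectProduct.one_right, map_one, one_mul, toAdd_one,
      ZMod.val_zero, pow_zero]
  map_mul' g h := by
    show psiH (g * h).left * rcE ^ (Multiplicative.toAdd (g * h).right).val = _
    rw [SemidirectProduct.mul_left, SemidirectProduct.mul_right, map_mul, toAdd_mul, cpow2]
    calc psiH g.left * psiH (phiH g.right h.left) *
          (rcE ^ (Multiplicative.toAdd g.right).val * rcE ^ (Multiplicative.toAdd h.right).val)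
        = psiH g.left * ((psiH (phiH g.right h.left) * rcE ^ (Multiplicative.toAdd g.right).val) *
            rcE ^ (Multiplicative.toAdd h.right).val) := by
          simp only [mul_assoc]
      _ = psiH g.left * ((rcE ^ (Multiplicative.toAdd g.right).val * psiH h.left) *
            rcE ^ (Multiplicative.toAdd h.right).val) := by
          rw [← cpow_psi]
      _ = psiH g.left * rcE ^ (Multiplicative.toAdd g.right).val *
            (psiH h.left * rcE ^ (Multiplicative.toAdd h.right).val) := by
          simp only [mul_assoc]

theorem chiH_apply (g : SemidirectProduct Lamplighter (Multiplicative (ZMod 2)) phiH) :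
    chiH g = psiH g.left * rcE ^ (Multiplicative.toAdd g.right).val := rfl


/-! ### Injectivity of χ -/

theorem chiH_injective : Function.Injective chiH := by
  rw [injective_iff_map_eq_one]
  intro g hg
  obtain ⟨x, k⟩ := g
  rcases zmod2_cases (Multiplicative.toAdd k) with hk | hk
  · have hg' : psiH x * rcE ^ (Multiplicative.toAdd k).val = 1 := hg
    rw [hk, ZMod.val_zero, pow_zero, mul_one] at hg'
    have hx : x = 1 := psiH_injective (by rw [hg', map_one])
    have hk1 : k = 1 := by
      have h2 : Multiplicative.toAdd k = Multiplicative.toAdd 1 := by rw [hk, toAdd_one]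
      exact Multiplicative.toAdd.injective h2
    rw [hx, hk1]
    rfl
  · exfalso
    have hg' : psiH x * rcE ^ (Multiplicative.toAdd k).val = 1 := hg
    rw [hk, show ((1 : ZMod 2)).val = 1 from rfl, pow_one] at hg'
    have h2 : rcE = psiH x⁻¹ := by
      rw [map_inv]
      exact eq_inv_of_mul_eq_one_right hg'
    have h3 : psiH (x⁻¹ * x⁻¹) = 1 := by rw [map_mul, ← h2, rcE_sq]
    have h4 : x⁻¹ * x⁻¹ = 1 := psiH_injective (by rw [h3, map_one])
    have h5 : (x⁻¹).pos = 0 := by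
      have h6 := congrArg Lamplighter.pos h4
      rw [Lamplighter.mul_pos] at h6
      have h7 : (x⁻¹).pos + (x⁻¹).pos = 0 := by rw [h6]; rfl
      omega
    have h6 : rcE = flipPerm (fun kk => decide (Af (x⁻¹).lamps kk = 1)) := by
      rw [h2, psiH_apply, h5, zpow_zero, mul_one]
      rfl
    have e1 : flipPerm (fun kk => decide (Af (x⁻¹).lamps kk = 1)) [true, false]
        = [true, true] := by rw [← h6]; rfl
    have e2 : flipPerm (fun kk => decide (Af (x⁻¹).lamps kk = 1)) [false, false]
        = [false, false] := by rw [← h6]; rfl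
    simp only [flipPerm_apply, flipb_cons, flipb_nil] at e1 e2
    cases hv0 : decide (Af (x⁻¹).lamps 0 = 1) <;> cases hv1 : decide (Af (x⁻¹).lamps 1 = 1) <;>
      rw [hv0] at e1 e2 <;> simp only [Nat.reduceAdd] at e1 e2 <;> rw [hv1] at e1 e2 <;>
      simp at e1 e2

/-! ### Range of χ -/

theorem a_mem3 : raE ∈ Subgroup.closure {raE, rbE, rcE} :=
  Subgroup.subset_closure (by simp)
theorem b_mem3 : rbE ∈ Subgroup.closure {raE, rbE, rcE} :=
  Subgroup.subset_closure (by simp)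
theorem c_mem3 : rcE ∈ Subgroup.closure {raE, rbE, rcE} :=
  Subgroup.subset_closure (by simp)

theorem cl3_le : Subgroup.closure {raE * rcE, rcE * rbE} ≤ Subgroup.closure {raE, rbE, rcE} := by
  rw [Subgroup.closure_le]
  rintro g hg
  simp only [Set.mem_insert_iff, Set.mem_singleton_iff] at hg
  rcases hg with rfl | rfl
  · exact mul_mem a_mem3 c_mem3
  · exact mul_mem c_mem3 b_mem3

theorem chiH_range : chiH.range = Subgroup.closure {raE, rbE, rcE} := by
  apply le_antisymm
  · rintro g ⟨s, rfl⟩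
    have h1 : psiH s.left ∈ Subgroup.closure {raE * rcE, rcE * rbE} :=
      psiH_range ▸ ⟨s.left, rfl⟩
    exact mul_mem (cl3_le h1) (pow_mem c_mem3 _)
  · rw [Subgroup.closure_le]
    rintro g hg
    simp only [Set.mem_insert_iff, Set.mem_singleton_iff] at hg
    rcases hg with rfl | rfl | rfl
    · refine ⟨⟨⟨0, 1⟩, Multiplicative.ofAdd 1⟩, ?_⟩
      show psiH (⟨0, 1⟩ : Lamplighter) *
        rcE ^ (Multiplicative.toAdd (Multiplicative.ofAdd (1 : ZMod 2))).val = raE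
      rw [toAdd_ofAdd, show ((1 : ZMod 2)).val = 1 from rfl, pow_one, psiH_apply]
      show flipZ (Af 0) * (raE * rcE) ^ (1 : ℤ) * rcE = raE
      rw [Af_zero, flipZ_zero, one_mul, zpow_one, mul_assoc, rcE_sq, mul_one]
    · refine ⟨⟨⟨Finsupp.single 0 1, 1⟩, Multiplicative.ofAdd 1⟩, ?_⟩
      show psiH (⟨Finsupp.single 0 1, 1⟩ : Lamplighter) *
        rcE ^ (Multiplicative.toAdd (Multiplicative.ofAdd (1 : ZMod 2))).val = rbE
      rw [toAdd_ofAdd, show ((1 : ZMod 2)).val = 1 from rfl, pow_one, psiH_apply]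
      show flipZ (Af (Finsupp.single 0 1)) * (raE * rcE) ^ (1 : ℤ) * rcE = rbE
      rw [Af_single, one_smul, flipZ_ind, zpow_one,
        show flipPerm (Sv 0) = raE * rbE from epsZ_zero]
      simp only [mul_assoc]
      rw [rcE_sq, mul_one, ab_comm, ← mul_assoc, raE_sq, one_mul]
    · refine ⟨⟨1, Multiplicative.ofAdd 1⟩, ?_⟩
      show psiH 1 * rcE ^ (Multiplicative.toAdd (Multiplicative.ofAdd (1 : ZMod 2))).val = rcE
      rw [toAdd_ofAdd, show ((1 : ZMod 2)).val = 1 from rfl, pow_one, map_one, one_mul]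

noncomputable def isoG : (Subgroup.closure {raE, rbE, rcE}) ≃*
    SemidirectProduct Lamplighter (Multiplicative (ZMod 2)) phiH :=
  (MulEquiv.subgroupCongr chiH_range.symm).trans (MonoidHom.ofInjective chiH_injective).symm

theorem chi_isoG (g : Subgroup.closure {raE, rbE, rcE}) :
    chiH (isoG g) = (g : Equiv.Perm (List Bool)) := by
  show chiH ((MonoidHom.ofInjective chiH_injective).symm
    ((MulEquiv.subgroupCongr chiH_range.symm) g)) = _
  rw [MonoidHom.apply_ofInjective_symm]
  rfl

/-! ### Normality -/

theorem conj_mem_H {g h : Equiv.Perm (List Bool)} (hg : g ∈ Subgroup.closure {raE, rbE, rcE})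
    (hh : h ∈ Subgroup.closure {raE * rcE, rcE * rbE}) :
    g * h * g⁻¹ ∈ Subgroup.closure {raE * rcE, rcE * rbE} := by
  obtain ⟨s, rfl⟩ : ∃ s, chiH s = g := ⟨isoG ⟨g, hg⟩, chi_isoG _⟩
  rw [← psiH_range] at hh ⊢
  obtain ⟨y, rfl⟩ := hh
  have hs : chiH s = psiH s.left * rcE ^ (Multiplicative.toAdd s.right).val := rfl
  rw [hs, mul_inv_rev]
  have h1 : psiH s.left * rcE ^ (Multiplicative.toAdd s.right).val * psiH y *
      ((rcE ^ (Multiplicative.toAdd s.right).val)⁻¹ * (psiH s.left)⁻¹)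
      = psiH s.left * (rcE ^ (Multiplicative.toAdd s.right).val * psiH y *
          (rcE ^ (Multiplicative.toAdd s.right).val)⁻¹) * (psiH s.left)⁻¹ := by
    simp only [mul_assoc]
  rw [h1]
  have h2 : rcE ^ (Multiplicative.toAdd s.right).val * psiH y *
      (rcE ^ (Multiplicative.toAdd s.right).val)⁻¹ = psiH (phiH s.right y) := by
    rw [cpow_psi, mul_inv_cancel_right]
  rw [h2, ← map_inv psiH, ← map_mul, ← map_mul]
  exact ⟨_, rfl⟩

/-! ### Index two -/

noncomputable def thetaH : (Subgroup.closure {raE, rbE, rcE}) →* Multiplicative (ZMod 2) :=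
  (SemidirectProduct.rightHom).comp isoG.toMonoidHom

theorem theta_spec (x : Subgroup.closure {raE, rbE, rcE}) :
    (x : Equiv.Perm (List Bool)) ∈ Subgroup.closure {raE * rcE, rcE * rbE} ↔ thetaH x = 1 := by
  constructor
  · intro hx
    rw [← psiH_range] at hx
    obtain ⟨y, hy⟩ := hx
    have h1 : chiH (isoG x) = chiH ⟨y, 1⟩ := by
      rw [chi_isoG]
      have h0 : chiH (⟨y, 1⟩ : SemidirectProduct Lamplighter (Multiplicative (ZMod 2)) phiH)
          = psiH y * rcE ^ (Multiplicative.toAdd (1 : Multiplicative (ZMod 2))).val := rfl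
      rw [h0, toAdd_one, ZMod.val_zero, pow_zero, mul_one, hy]
    have h2 : isoG x = ⟨y, 1⟩ := chiH_injective h1
    show SemidirectProduct.rightHom (isoG x) = 1
    rw [h2]
    rfl
  · intro hx
    have h1 : (isoG x).right = 1 := hx
    have h2 : (x : Equiv.Perm (List Bool)) = psiH (isoG x).left := by
      rw [← chi_isoG x]
      show psiH (isoG x).left * rcE ^ (Multiplicative.toAdd (isoG x).right).val = _
      rw [h1, toAdd_one, ZMod.val_zero, pow_zero, mul_one]
    rw [h2, ← psiH_range]
    exact ⟨_, rfl⟩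

theorem theta_surj : Function.Surjective thetaH := by
  have h1 : Function.Surjective
      (SemidirectProduct.rightHom :
        SemidirectProduct Lamplighter (Multiplicative (ZMod 2)) phiH →* _) :=
    SemidirectProduct.rightHom_surjective
  exact h1.comp isoG.surjective

theorem relindex_eq :
    (Subgroup.closure {raE * rcE, rcE * rbE}).relIndex (Subgroup.closure {raE, rbE, rcE}) = 2 := by
  rw [Subgroup.relIndex]
  have hker : (Subgroup.closure {raE * rcE, rcE * rbE}).subgroupOf
      (Subgroup.closure {raE, rbE, rcE}) = thetaH.ker := by
    ext x
    rw [Subgroup.mem_subgroupOf, MonoidHom.mem_ker]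
    exact theta_spec x
  rw [hker, Subgroup.index_ker, MonoidHom.range_eq_top.mpr theta_surj]
  rw [Nat.card_congr Subgroup.topEquiv.toEquiv,
    Nat.card_congr (Multiplicative.toAdd (α := ZMod 2)), Nat.card_zmod]

/-! ### Conjugation relations -/

theorem c_conj_v : rcE * (rcE * rbE) * rcE⁻¹ = (rcE * rbE)⁻¹ := by
  rw [rcE_inv, mul_inv_rev, rbE_inv, rcE_inv,
    show rcE * (rcE * rbE) * rcE = (rcE * rcE) * (rbE * rcE) by simp only [mul_assoc],
    rcE_sq, one_mul]

/-! ### Identification with abstract generators -/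

theorem ident (a b c : Equiv.Perm (List Bool)) (ha : WRec true a c c) (hb : WRec false b c c)
    (hc : WRec false c b a) : ∀ w, a w = ra w ∧ b w = rb w ∧ c w = rc w := by
  intro w
  induction w with
  | nil => exact ⟨ha.1, hb.1, hc.1⟩
  | cons x w ih =>
    refine ⟨?_, ?_, ?_⟩
    · cases x
      · rw [ha.2.1 w, ih.2.2]; rfl
      · rw [ha.2.2 w, ih.2.2]; rfl
    · cases x
      · rw [hb.2.1 w, ih.2.2]; rfl
      · rw [hb.2.2 w, ih.2.2]; rfl
    · cases x
      · rw [hc.2.1 w, ih.2.1]; rfl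
      · rw [hc.2.2 w, ih.1]; rfl

end S19

/-- Let `a, b, c` be the tree automorphisms defined by the wreath
recursion `a = σ(c,c)`, `b = (c,c)`, `c = (b,a)`, and set `G = ⟨a,b,c⟩`,
`H = ⟨ac, cb⟩`.  Then `a² = b² = c² = 1`, `H` is a normal subgroup of index 2 in `G`,
conjugation by `c` inverts both generators `ac` and `cb` of `H`, `H` is isomorphic to
the lamplighter group `ℤ ≀ C₂ = (⊕_{i∈ℤ} ℤ/2ℤ) ⋊ ℤ`, and consequently `G` is isomorphic
to a semidirect product `C₂ ⋉ (ℤ ≀ C₂)`. -/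
theorem generates_C2_semidirect_lamplighter (a b c : Equiv.Perm (List Bool))
    (ha : WRec true a c c) (hb : WRec false b c c) (hc : WRec false c b a) :
    a * a = 1 ∧ b * b = 1 ∧ c * c = 1 ∧
    Subgroup.closure {a * c, c * b} ≤ Subgroup.closure {a, b, c} ∧
    (∀ g ∈ Subgroup.closure {a, b, c}, ∀ h ∈ Subgroup.closure {a * c, c * b},
      g * h * g⁻¹ ∈ Subgroup.closure {a * c, c * b}) ∧
    (Subgroup.closure {a * c, c * b}).relIndex (Subgroup.closure {a, b, c}) = 2 ∧
    c * (a * c) * c⁻¹ = (a * c)⁻¹ ∧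
    c * (c * b) * c⁻¹ = (c * b)⁻¹ ∧
    Nonempty (Subgroup.closure {a * c, c * b} ≃* Lamplighter) ∧
    (∃ φ : Multiplicative (ZMod 2) →* MulAut Lamplighter,
      Nonempty (Subgroup.closure {a, b, c} ≃*
        SemidirectProduct Lamplighter (Multiplicative (ZMod 2)) φ)) := by
  have hA : a = S19.raE := Equiv.ext fun w => (S19.ident a b c ha hb hc w).1
  have hB : b = S19.rbE := Equiv.ext fun w => (S19.ident a b c ha hb hc w).2.1
  have hC : c = S19.rcE := Equiv.ext fun w => (S19.ident a b c ha hb hc w).2.2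
  subst hA hB hC
  exact ⟨S19.raE_sq, S19.rbE_sq, S19.rcE_sq, S19.cl3_le,
    fun g hg h hh => S19.conj_mem_H hg hh, S19.relindex_eq, S19.c_conj_u, S19.c_conj_v,
    ⟨S19.isoH⟩, ⟨S19.phiH, ⟨S19.isoG⟩⟩⟩
end
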